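/- arXiv:1603.03134 — 4 statements merged into one kernel-verified Lean document; each statement's English description precedes it below -/
import Mathlib

section
/- Let \(p\) be a prime, \(q\) a positive integer, and \(d,m,n\) integers. Then the number of pairs \((a,b)\) of residues modulo \(qp\) with \(ab\equiv 1\ (\mathrm{mod}\ qp)\), \(ad\equiv m\ (\mathrm{mod}\ q)\) and \(b\equiv n\ (\mathrm{mod}\ q)\) equals \(p-1+\mathbf{1}_{p\mid q}\) if \(\gcd(n,q)=1\) and \(mn\equiv d\ (\mathrm{mod}\ q)\), and equals \(0\) otherwise. -/
private lemma fiber_card_mul {G H : Type*} [Group G] [Group H] [Finite G] (f : G →* H)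
    (hf : Function.Surjective f) (h : H) :
    Nat.card {g // f g = h} * Nat.card H = Nat.card G := by
  obtain ⟨g0, hg0⟩ := hf h
  have e : {g // f g = h} ≃ f.ker := by
    refine ⟨fun g => ⟨g.1 * g0⁻¹, ?_⟩, fun k => ⟨k.1 * g0, ?_⟩, ?_, ?_⟩
    · simp [MonoidHom.mem_ker, map_mul, g.2, hg0]
    · have hk := k.2
      simp only [MonoidHom.mem_ker] at hk
      simp [map_mul, hk, hg0]
    · intro g; ext; simp
    · intro k; ext; simp
  rw [Nat.card_congr e]
  have h1 := Subgroup.card_eq_card_quotient_mul_card_subgroup f.ker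
  have h2 : Nat.card (G ⧸ f.ker) = Nat.card H :=
    Nat.card_congr (QuotientGroup.quotientKerEquivOfSurjective f hf).toEquiv
  rw [h1, h2, mul_comm]

private lemma isUnit_intCast_iff (q : ℕ) [NeZero q] (n : ℤ) :
    IsUnit ((n : ℤ) : ZMod q) ↔ Int.gcd n (q : ℤ) = 1 := by
  rw [← Int.isCoprime_iff_gcd_eq_one]
  constructor
  · intro h
    obtain ⟨u, hu⟩ := h
    set a : ℤ := ZMod.cast (↑u⁻¹ : ZMod q) with ha
    have h1 : ((a * n : ℤ) : ZMod q) = 1 := by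
      push_cast
      rw [ha, ZMod.intCast_zmod_cast, ← hu]
      exact u.inv_mul
    have h2 : (q : ℤ) ∣ a * n - 1 := by
      rw [← ZMod.intCast_zmod_eq_zero_iff_dvd, Int.cast_sub, h1, Int.cast_one, sub_self]
    obtain ⟨c, hc⟩ := h2
    exact ⟨a, -c, by linarith⟩
  · rintro ⟨a, b, hab⟩
    apply IsUnit.of_mul_eq_one ((a : ℤ) : ZMod q)
    have : ((a * n + b * q : ℤ) : ZMod q) = 1 := by rw [hab]; norm_cast
    push_cast at this
    rw [ZMod.natCast_self] at this
    rw [mul_comm]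
    simpa using this

/-- Let `p` be a prime, `q ≥ 1`, and `d, m, n` integers.  The number of pairs `(a,b)` of
residues modulo `qp` with `ab ≡ 1 (mod qp)`, `ad ≡ m (mod q)` and `b ≡ n (mod q)` equals
`p - 1 + 𝟙_{p ∣ q}` if `gcd(n,q) = 1` and `mn ≡ d (mod q)`, and `0` otherwise. -/
theorem count_pairs_mod_q_q (p q : ℕ) (hp : p.Prime) (hq : 0 < q) (d m n : ℤ) :
    Nat.card {ab : ZMod (q * p) × ZMod (q * p) //
        ab.1 * ab.2 = 1 ∧
        ZMod.castHom (dvd_mul_right q p) (ZMod q) ab.1 * (d : ZMod q) = (m : ZMod q) ∧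
        ZMod.castHom (dvd_mul_right q p) (ZMod q) ab.2 = (n : ZMod q)}
      = if Int.gcd n (q : ℤ) = 1 ∧ (m * n) % (q : ℤ) = d % (q : ℤ) then
          p - 1 + (if p ∣ q then 1 else 0)
        else 0 := by
  haveI : NeZero q := ⟨hq.ne'⟩
  haveI : NeZero (q * p) := ⟨(Nat.mul_pos hq hp.pos).ne'⟩
  set f := ZMod.castHom (dvd_mul_right q p) (ZMod q) with hfdef
  have e1 : {ab : ZMod (q * p) × ZMod (q * p) //
        ab.1 * ab.2 = 1 ∧ f ab.1 * (d : ZMod q) = (m : ZMod q) ∧ f ab.2 = (n : ZMod q)}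
      ≃ {u : (ZMod (q * p))ˣ //
        f ↑(u⁻¹) * (d : ZMod q) = (m : ZMod q) ∧ f ↑u = (n : ZMod q)} :=
    { toFun := fun x => ⟨⟨x.1.2, x.1.1, mul_comm x.1.1 x.1.2 ▸ x.2.1, x.2.1⟩,
        x.2.2.1, x.2.2.2⟩
      invFun := fun u => ⟨(↑(u.1⁻¹), ↑u.1), by simp, u.2.1, u.2.2⟩
      left_inv := fun x => rfl
      right_inv := fun u => rfl }
  rw [Nat.card_congr e1]
  by_cases hcond : Int.gcd n (q : ℤ) = 1 ∧ (m * n) % (q : ℤ) = d % (q : ℤ)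
  · rw [if_pos hcond]
    have hnu : IsUnit ((n : ℤ) : ZMod q) := (isUnit_intCast_iff q n).mpr hcond.1
    have hd : ((d : ℤ) : ZMod q) = ((m * n : ℤ) : ZMod q) :=
      ((ZMod.intCast_eq_intCast_iff' _ _ _).mpr hcond.2).symm
    have key : ∀ u : (ZMod (q * p))ˣ,
        (f ↑(u⁻¹) * (d : ZMod q) = (m : ZMod q) ∧ f ↑u = (n : ZMod q)) ↔
          ZMod.unitsMap (dvd_mul_right q p) u = hnu.unit := by
      intro u
      constructor
      · rintro ⟨-, h2⟩
        ext
        rw [hfdef, ZMod.castHom_apply] at h2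
        simp [ZMod.unitsMap, h2, IsUnit.unit_spec]
      · intro h
        have h2 : f ↑u = (n : ZMod q) := by
          have := congrArg (Units.val) h
          simpa [ZMod.unitsMap, IsUnit.unit_spec, hfdef] using this
        refine ⟨?_, h2⟩
        have hinv : f ↑(u⁻¹) * (n : ZMod q) = 1 := by
          rw [← h2, ← map_mul]
          simp
        rw [hd]
        push_cast
        calc f ↑(u⁻¹) * ((m : ZMod q) * (n : ZMod q))
            = (m : ZMod q) * (f ↑(u⁻¹) * (n : ZMod q)) := by ring
          _ = (m : ZMod q) := by rw [hinv, mul_one]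
    rw [Nat.card_congr (Equiv.subtypeEquivRight key)]
    have hmul := fiber_card_mul (ZMod.unitsMap (dvd_mul_right q p))
      (ZMod.unitsMap_surjective (dvd_mul_right q p)) hnu.unit
    have c1 : Nat.card (ZMod q)ˣ = q.totient := by
      rw [Nat.card_eq_fintype_card, ZMod.card_units_eq_totient]
    have c2 : Nat.card (ZMod (q * p))ˣ = (q * p).totient := by
      rw [Nat.card_eq_fintype_card, ZMod.card_units_eq_totient]
    rw [c1, c2] at hmul
    have htot : (q * p).totient = (p - 1 + (if p ∣ q then 1 else 0)) * q.totient := by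
      by_cases hpq : p ∣ q
      · rw [if_pos hpq]
        have hp1 : p - 1 + 1 = p := Nat.succ_pred_eq_of_pos hp.pos
        rw [hp1, mul_comm q p, Nat.totient_mul_of_prime_of_dvd hp hpq]
      · rw [if_neg hpq, add_zero,
          Nat.totient_mul (Nat.coprime_comm.mp (hp.coprime_iff_not_dvd.mpr hpq)),
          Nat.totient_prime hp, mul_comm]
    rw [htot] at hmul
    exact Nat.eq_of_mul_eq_mul_right (Nat.totient_pos.mpr hq) hmul
  · rw [if_neg hcond]
    rw [Nat.card_eq_zero]
    left
    constructor
    rintro ⟨u, h1, h2⟩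
    apply hcond
    have hg : Int.gcd n (q : ℤ) = 1 := by
      rw [← isUnit_intCast_iff q n, ← h2]
      exact (u.isUnit.map f)
    refine ⟨hg, ?_⟩
    rw [← ZMod.intCast_eq_intCast_iff']
    have hinv : f ↑(u⁻¹) * f ↑u = 1 := by rw [← map_mul]; simp
    have : ((m * n : ℤ) : ZMod q) = ((d : ℤ) : ZMod q) := by
      push_cast
      rw [← h1, ← h2]
      calc f ↑(u⁻¹) * (d : ZMod q) * f ↑u
          = (d : ZMod q) * (f ↑(u⁻¹) * f ↑u) := by ring
        _ = (d : ZMod q) := by rw [hinv, mul_one]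
    exact this
end

section
/- Let \(p\) be a prime, \(q\) a positive integer, and \(d,m,n\) integers with \(\gcd(d,p)=1\). Then the number of pairs \((a,b)\) of residues modulo \(qp\) with \(ab\equiv 1\ (\mathrm{mod}\ qp)\), \(ad\equiv m\ (\mathrm{mod}\ qp)\) and \(b\equiv n\ (\mathrm{mod}\ q)\) equals \(1\) if \(\gcd(n,q)=1\), \(\gcd(m,p)=1\) and \(mn\equiv d\ (\mathrm{mod}\ q)\), and equals \(0\) otherwise. -/
lemma isUnit_intCast_zmod_iff (q : ℕ) (n : ℤ) :
    IsUnit ((n : ZMod q)) ↔ Int.gcd n (q : ℤ) = 1 := by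
  have h1 : Int.gcd n (q : ℤ) = Nat.gcd n.natAbs q := by simp [Int.gcd]
  have h2 : ((n.natAbs : ℕ) : ZMod q) = (n : ZMod q) ∨
      ((n.natAbs : ℕ) : ZMod q) = -(n : ZMod q) := by
    rcases Int.natAbs_eq n with h | h
    · left; conv_rhs => rw [h]
      exact (Int.cast_natCast _).symm
    · right; conv_rhs => rw [h]
      rw [Int.cast_neg, Int.cast_natCast, neg_neg]
  rw [h1, ← Nat.coprime_iff_gcd_eq_one, ← ZMod.isUnit_iff_coprime]
  rcases h2 with h | h
  · rw [h]
  · rw [h]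
    exact (IsUnit.neg_iff _).symm

lemma aux_dvd (q p : ℕ) (hq : 0 < q) (d x : ℤ) (hd : IsCoprime d (p : ℤ))
    (h1 : (q : ℤ) ∣ x) (h2 : ((q : ℤ) * (p : ℤ)) ∣ x * d) : ((q : ℤ) * (p : ℤ)) ∣ x := by
  obtain ⟨u, rfl⟩ := h1
  have hq' : (q : ℤ) ≠ 0 := by exact_mod_cast hq.ne'
  obtain ⟨k, hk⟩ := h2
  have hpud : (p : ℤ) ∣ u * d :=
    ⟨k, mul_left_cancel₀ hq' (by linear_combination hk)⟩
  have hpu : (p : ℤ) ∣ u := (hd.symm).dvd_of_dvd_mul_right hpud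
  exact mul_dvd_mul_left _ hpu

lemma key_zero (q p : ℕ) (hq : 0 < q) (hp : 0 < p) (d : ℤ) (hd : Int.gcd d (p : ℤ) = 1)
    (x : ZMod (q * p)) (h1 : x * (d : ZMod (q * p)) = 0)
    (h2 : ZMod.castHom (dvd_mul_right q p) (ZMod q) x = 0) : x = 0 := by
  haveI : NeZero (q * p) := ⟨(Nat.mul_pos hq hp).ne'⟩
  haveI : NeZero q := ⟨hq.ne'⟩
  set X : ℤ := ((x.val : ℕ) : ℤ) with hXdef
  have hX : ((X : ℤ) : ZMod (q * p)) = x := by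
    rw [hXdef, Int.cast_natCast]
    exact ZMod.natCast_rightInverse x
  have d1 : ((q : ℤ) * (p : ℤ)) ∣ X * d := by
    have : ((X * d : ℤ) : ZMod (q * p)) = 0 := by
      rw [Int.cast_mul, hX, h1]
    rw [ZMod.intCast_zmod_eq_zero_iff_dvd] at this
    push_cast at this
    exact this
  have d2 : (q : ℤ) ∣ X := by
    rw [← ZMod.intCast_zmod_eq_zero_iff_dvd]
    have h : ((X : ℤ) : ZMod q)
        = ZMod.castHom (dvd_mul_right q p) (ZMod q) ((X : ℤ) : ZMod (q * p)) :=
      (map_intCast _ _).symm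
    rw [h, hX, h2]
  have hdvd := aux_dvd q p hq d X (Int.isCoprime_iff_gcd_eq_one.mpr hd) d2 d1
  rw [← hX, ZMod.intCast_zmod_eq_zero_iff_dvd]
  push_cast
  exact hdvd

/-- Let `p` be a prime, `q ≥ 1`, and `d, m, n` integers with `gcd(d,p) = 1`.  The number of
pairs `(a,b)` of residues modulo `qp` with `ab ≡ 1 (mod qp)`, `ad ≡ m (mod qp)` and
`b ≡ n (mod q)` equals `1` if `gcd(n,q) = 1`, `gcd(m,p) = 1` and `mn ≡ d (mod q)`, and `0`
otherwise. -/
theorem count_pairs_mod_qp_q (p q : ℕ) (hp : p.Prime) (hq : 0 < q) (d m n : ℤ)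
    (hd : Int.gcd d (p : ℤ) = 1) :
    Nat.card {ab : ZMod (q * p) × ZMod (q * p) //
        ab.1 * ab.2 = 1 ∧
        ab.1 * (d : ZMod (q * p)) = (m : ZMod (q * p)) ∧
        ZMod.castHom (dvd_mul_right q p) (ZMod q) ab.2 = (n : ZMod q)}
      = if Int.gcd n (q : ℤ) = 1 ∧ Int.gcd m (p : ℤ) = 1 ∧
            (m * n) % (q : ℤ) = d % (q : ℤ) then 1
        else 0 := by
  haveI : NeZero p := ⟨hp.pos.ne'⟩
  haveI : NeZero q := ⟨hq.ne'⟩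
  haveI : NeZero (q * p) := ⟨(Nat.mul_pos hq hp.pos).ne'⟩
  split_ifs with H
  · obtain ⟨hn, hm, hmn⟩ := H
    rw [Nat.card_eq_one_iff_exists]
    obtain ⟨u, v, huv⟩ := Int.isCoprime_iff_gcd_eq_one.mpr hn
    obtain ⟨w, z, hwz⟩ := Int.isCoprime_iff_gcd_eq_one.mpr hd
    have hq1 : (q : ℤ) ∣ d - m * n := Int.ModEq.dvd hmn
    obtain ⟨e, he⟩ := hq1
    have hq2 : (q : ℤ) ∣ m - u * d := ⟨m * v - u * e, by linear_combination (-m) * huv - u * he⟩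
    obtain ⟨c, hc⟩ := hq2
    have hAd : ∃ k : ℤ, (u + q * (c * w)) * d - m = ((q : ℤ) * (p : ℤ)) * k :=
      ⟨-(c * z), by linear_combination ((q : ℤ) * c) * hwz - hc⟩
    obtain ⟨k, hk⟩ := hAd
    have hcopA_q : IsCoprime (u + (q : ℤ) * (c * w)) ((q : ℤ)) :=
      ⟨n, v - n * (c * w), by linear_combination huv⟩
    have hcopA_p : IsCoprime (u + (q : ℤ) * (c * w)) ((p : ℤ)) := by
      obtain ⟨α, β, hαβ⟩ := Int.isCoprime_iff_gcd_eq_one.mpr hm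
      exact ⟨α * d, β - α * (q * k), by linear_combination α * hk + hαβ⟩
    obtain ⟨B, C, hBC⟩ := hcopA_q.mul_right hcopA_p
    have p1 : (((u + (q : ℤ) * (c * w)) : ℤ) : ZMod (q * p)) * ((B : ℤ) : ZMod (q * p)) = 1 := by
      have h0 : ((((u + (q : ℤ) * (c * w)) * B - 1) : ℤ) : ZMod (q * p)) = 0 := by
        rw [ZMod.intCast_zmod_eq_zero_iff_dvd]
        push_cast
        exact ⟨-C, by linear_combination hBC⟩
      push_cast at h0 ⊢
      linear_combination h0
    have p2 : (((u + (q : ℤ) * (c * w)) : ℤ) : ZMod (q * p)) * (d : ZMod (q * p))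
        = (m : ZMod (q * p)) := by
      have h0 : ((((u + (q : ℤ) * (c * w)) * d - m) : ℤ) : ZMod (q * p)) = 0 := by
        rw [ZMod.intCast_zmod_eq_zero_iff_dvd]
        push_cast
        exact ⟨k, by linear_combination hk⟩
      push_cast at h0 ⊢
      linear_combination h0
    have p3 : ZMod.castHom (dvd_mul_right q p) (ZMod q) ((B : ℤ) : ZMod (q * p))
        = (n : ZMod q) := by
      have h0 : (((B - n) : ℤ) : ZMod q) = 0 := by
        rw [ZMod.intCast_zmod_eq_zero_iff_dvd]
        exact ⟨B * v - n * B * (c * w) - n * C * p, by linear_combination n * hBC - B * huv⟩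
      rw [map_intCast]
      push_cast at h0
      linear_combination h0
    refine ⟨⟨((((u + (q : ℤ) * (c * w)) : ℤ) : ZMod (q * p)), ((B : ℤ) : ZMod (q * p))),
      p1, p2, p3⟩, ?_⟩
    rintro ⟨⟨a, b⟩, h1, h2, h3⟩
    have hAu : ZMod.castHom (dvd_mul_right q p) (ZMod q)
        (((u + (q : ℤ) * (c * w)) : ℤ) : ZMod (q * p)) * (n : ZMod q) = 1 := by
      rw [← p3, ← map_mul, p1, map_one]
    have hau : ZMod.castHom (dvd_mul_right q p) (ZMod q) a * (n : ZMod q) = 1 := by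
      rw [← h3, ← map_mul, h1, map_one]
    have hcast_eq : ZMod.castHom (dvd_mul_right q p) (ZMod q) a
        = ZMod.castHom (dvd_mul_right q p) (ZMod q)
          (((u + (q : ℤ) * (c * w)) : ℤ) : ZMod (q * p)) := by
      calc ZMod.castHom (dvd_mul_right q p) (ZMod q) a
          = ZMod.castHom (dvd_mul_right q p) (ZMod q) a *
            (ZMod.castHom (dvd_mul_right q p) (ZMod q)
              (((u + (q : ℤ) * (c * w)) : ℤ) : ZMod (q * p)) * (n : ZMod q)) := by
            rw [hAu, mul_one]
        _ = ZMod.castHom (dvd_mul_right q p) (ZMod q)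
              (((u + (q : ℤ) * (c * w)) : ℤ) : ZMod (q * p)) *
            (ZMod.castHom (dvd_mul_right q p) (ZMod q) a * (n : ZMod q)) := by ring
        _ = _ := by rw [hau, mul_one]
    have ha : a = (((u + (q : ℤ) * (c * w)) : ℤ) : ZMod (q * p)) := by
      have hz := key_zero q p hq hp.pos d hd
        (a - (((u + (q : ℤ) * (c * w)) : ℤ) : ZMod (q * p)))
        (by rw [sub_mul, h2, p2, sub_self])
        (by rw [map_sub, hcast_eq, sub_self])
      exact sub_eq_zero.mp hz
    have hb : b = ((B : ℤ) : ZMod (q * p)) := by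
      calc b = b * ((((u + (q : ℤ) * (c * w)) : ℤ) : ZMod (q * p)) * ((B : ℤ) : ZMod (q * p)))
          := by rw [p1, mul_one]
        _ = b * (a * ((B : ℤ) : ZMod (q * p))) := by rw [← ha]
        _ = (a * b) * ((B : ℤ) : ZMod (q * p)) := by ring
        _ = ((B : ℤ) : ZMod (q * p)) := by rw [h1, one_mul]
    exact Subtype.ext (Prod.ext ha hb)
  · rw [Nat.card_eq_zero]
    refine Or.inl ⟨?_⟩
    rintro ⟨⟨a, b⟩, h1, h2, h3⟩
    apply H
    refine ⟨?_, ?_, ?_⟩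
    · rw [← isUnit_intCast_zmod_iff]
      have hb : IsUnit b := IsUnit.of_mul_eq_one a (by rw [mul_comm b a]; exact h1)
      have := hb.map (ZMod.castHom (dvd_mul_right q p) (ZMod q))
      rwa [h3] at this
    · rw [← isUnit_intCast_zmod_iff]
      have ha : IsUnit a := IsUnit.of_mul_eq_one b h1
      have hdp : IsUnit ((d : ZMod p)) := (isUnit_intCast_zmod_iff p d).mpr hd
      have hmu := (ha.map (ZMod.castHom (dvd_mul_left p q) (ZMod p))).mul hdp
      have h2' := congrArg (ZMod.castHom (dvd_mul_left p q) (ZMod p)) h2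
      rw [map_mul, map_intCast, map_intCast] at h2'
      rwa [h2'] at hmu
    · have h2' := congrArg (ZMod.castHom (dvd_mul_right q p) (ZMod q)) h2
      rw [map_mul, map_intCast, map_intCast] at h2'
      have h1' := congrArg (ZMod.castHom (dvd_mul_right q p) (ZMod q)) h1
      rw [map_mul, map_one, h3] at h1'
      rw [← ZMod.intCast_eq_intCast_iff']
      push_cast
      calc (m : ZMod q) * (n : ZMod q)
          = (ZMod.castHom (dvd_mul_right q p) (ZMod q) a * (d : ZMod q)) * (n : ZMod q) := by
            rw [h2']
        _ = (ZMod.castHom (dvd_mul_right q p) (ZMod q) a * (n : ZMod q)) * (d : ZMod q) := by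
            ring
        _ = (d : ZMod q) := by rw [h1', one_mul]
end

section
/- There is an absolute constant \(C>0\) such that for every prime \(p\), all integers \(d\geq 1\), \(k\geq 1\), and every real \(t\neq 0\) (write \(T=3+|t|\)): \(\Bigl|\frac{p^{2it}-1}{p}\cdot\frac{\zeta(1-2it)}{(2\pi\sqrt{d/p})^{\,1-2it}}\cdot\frac{\Gamma(k-it)}{\Gamma(k+it)}\Bigr| \;\leq\; C\,\frac{\log(pT)}{\sqrt{dp}}\). -/
open MeasureTheory Set Filter intervalIntegral Topology

noncomputable def zk (s : ℂ) (x : ℝ) : ℂ := ((Int.fract x : ℝ) : ℂ) * (x : ℂ) ^ (-s - 1)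

lemma zk_norm_le {s : ℂ} {x : ℝ} (hx : 0 < x) : ‖zk s x‖ ≤ x ^ (-s.re - 1) := by
  rw [zk, norm_mul]
  have h1 : ‖((Int.fract x : ℝ) : ℂ)‖ ≤ 1 := by
    rw [Complex.norm_real, Real.norm_eq_abs, abs_of_nonneg (Int.fract_nonneg x)]
    exact (Int.fract_lt_one x).le
  have h2 : ‖(x : ℂ) ^ (-s - 1)‖ = x ^ (-s.re - 1) := by
    rw [Complex.norm_cpow_eq_rpow_re_of_pos hx]
    norm_num
  rw [h2]
  nlinarith [Real.rpow_nonneg hx.le (-s.re - 1), norm_nonneg (((Int.fract x : ℝ) : ℂ))]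

lemma zk_aesm (s : ℂ) (c : ℝ) (hc : 0 < c) :
    AEStronglyMeasurable (zk s) (volume.restrict (Ioi c)) := by
  apply AEStronglyMeasurable.mul
  · exact (Complex.continuous_ofReal.measurable.comp measurable_fract).aestronglyMeasurable
  · apply ContinuousOn.aestronglyMeasurable _ measurableSet_Ioi
    intro x hx
    exact (Complex.continuousAt_ofReal_cpow_const x _
      (Or.inr (hc.trans hx).ne')).continuousWithinAt

lemma zk_integrableOn {s : ℂ} (hs : 0 < s.re) {c : ℝ} (hc : 1 ≤ c) :
    IntegrableOn (zk s) (Ioi c) := by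
  have hc0 : (0:ℝ) < c := lt_of_lt_of_le one_pos hc
  refine Integrable.mono (g := fun x : ℝ => x ^ (-s.re - 1))
    ((integrableOn_Ioi_rpow_of_lt (by linarith) hc0)) (zk_aesm s c hc0) ?_
  filter_upwards [ae_restrict_mem measurableSet_Ioi] with x hx
  have hx0 : (0:ℝ) < x := hc0.trans hx
  rw [Real.norm_eq_abs, abs_of_nonneg (Real.rpow_nonneg hx0.le _)]
  exact zk_norm_le hx0

lemma zk_interval {s : ℂ} (hs0 : s ≠ 0) (hs1 : s ≠ 1) {n : ℕ} (hn : 1 ≤ n) :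
    s * ∫ x in (n:ℝ)..((n:ℝ)+1), zk s x
      = ((n:ℝ):ℂ)^(1-s)/(s-1) - (((n:ℝ)+1:ℝ):ℂ)^(1-s)/(s-1) - (((n:ℝ)+1:ℝ):ℂ)^(-s) := by
  have hn0 : (0:ℝ) < n := by exact_mod_cast Nat.pos_of_ne_zero (by omega)
  have hmem : (0:ℝ) ∉ Set.uIcc (n:ℝ) ((n:ℝ)+1) := by
    rw [Set.uIcc_of_le (by linarith)]
    intro h
    exact absurd h.1 (by linarith)
  have hcongr : ∫ x in (n:ℝ)..((n:ℝ)+1), zk s x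
      = ∫ x in (n:ℝ)..((n:ℝ)+1), ((x:ℂ) ^ (-s) - (n:ℝ) * (x:ℂ) ^ (-s-1)) := by
    apply intervalIntegral.integral_congr_ae
    have hne : ∀ᵐ x : ℝ, x ≠ (n:ℝ)+1 := by
      refine (MeasureTheory.ae_iff ..).mpr ?_
      have : {x : ℝ | ¬ x ≠ (n:ℝ)+1} = {(n:ℝ)+1} := by ext y; simp
      rw [this]; exact measure_singleton _
    filter_upwards [hne] with x hx hmem'
    rw [Set.uIoc_of_le (by linarith)] at hmem'
    have hx0 : (0:ℝ) < x := lt_trans hn0 hmem'.1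
    have hfr : Int.fract x = x - n := by
      rw [Int.fract]
      have : ⌊x⌋ = (n:ℤ) := by
        rw [Int.floor_eq_iff]
        constructor
        · push_cast; linarith [hmem'.1]
        · push_cast; rcases lt_or_eq_of_le hmem'.2 with h | h
          · linarith
          · exact absurd h hx
      rw [this]; push_cast; ring
    have hxc : (x:ℂ) ≠ 0 := by exact_mod_cast hx0.ne'
    have hpow : (x:ℂ) ^ (-s) = (x:ℂ) * (x:ℂ) ^ (-s-1) := by
      have h := Complex.cpow_add (x := (x:ℂ)) 1 (-s-1) hxc
      rw [show (1:ℂ) + (-s-1) = -s by ring, Complex.cpow_one] at h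
      exact h
    rw [zk, hfr, hpow]
    push_cast
    ring
  have hint1 : IntervalIntegrable (fun x : ℝ => (x:ℂ) ^ (-s)) volume (n:ℝ) ((n:ℝ)+1) :=
    intervalIntegral.intervalIntegrable_cpow (Or.inr hmem)
  have hint2 : IntervalIntegrable (fun x : ℝ => (n:ℝ) * (x:ℂ) ^ (-s-1)) volume (n:ℝ) ((n:ℝ)+1) :=
    (intervalIntegral.intervalIntegrable_cpow (Or.inr hmem)).const_mul _
  have hr1 : -s ≠ -1 := fun h => hs1 (neg_inj.mp h)
  have hr2 : -s - 1 ≠ -1 := fun h => hs0 (by linear_combination -h)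
  rw [hcongr, intervalIntegral.integral_sub hint1 hint2, intervalIntegral.integral_const_mul,
    integral_cpow (Or.inr ⟨hr1, hmem⟩), integral_cpow (Or.inr ⟨hr2, hmem⟩)]
  have hnc : ((n:ℝ):ℂ) ≠ 0 := by exact_mod_cast hn0.ne'
  have hnc1 : (((n:ℝ)+1:ℝ):ℂ) ≠ 0 := by
    have : ((n:ℝ)+1:ℝ) ≠ 0 := by linarith
    exact_mod_cast this
  have e1 : ((n:ℝ):ℂ)^(-s+1) = ((n:ℝ):ℂ) * ((n:ℝ):ℂ)^(-s) := by
    rw [Complex.cpow_add _ _ hnc, Complex.cpow_one]; ring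
  have e2 : ((n:ℝ):ℂ)^(1-s) = ((n:ℝ):ℂ) * ((n:ℝ):ℂ)^(-s) := by
    rw [show (1:ℂ)-s = -s+1 by ring, e1]
  have e3 : (((n:ℝ)+1:ℝ):ℂ)^(-s+1) = (((n:ℝ)+1:ℝ):ℂ) * (((n:ℝ)+1:ℝ):ℂ)^(-s) := by
    rw [Complex.cpow_add _ _ hnc1, Complex.cpow_one]; ring
  have e4 : (((n:ℝ)+1:ℝ):ℂ)^(1-s) = (((n:ℝ)+1:ℝ):ℂ) * (((n:ℝ)+1:ℝ):ℂ)^(-s) := by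
    rw [show (1:ℂ)-s = -s+1 by ring, e3]
  have h1 : (-s) + 1 ≠ 0 := fun h => hs1 (by linear_combination -h)
  have h2 : (-s-1) + 1 ≠ 0 := fun h => hs0 (by linear_combination -h)
  have h3 : s - 1 ≠ 0 := sub_ne_zero.mpr hs1
  rw [show -s-1+1 = -s by ring] at h2 ⊢
  have hcast : (((n:ℝ)+1:ℝ):ℂ) = ((n:ℝ):ℂ) + 1 := by push_cast; ring
  rw [e1, e2, e3, e4, hcast]
  field_simp
  ring

lemma zk_intervalIntegrable {s : ℂ} (hs : 0 < s.re) {a b : ℝ} (ha : 1 ≤ a) (hb : 1 ≤ b) :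
    IntervalIntegrable (zk s) volume a b := by
  rcases le_or_gt a b with hab | hab
  · rw [intervalIntegrable_iff_integrableOn_Ioc_of_le hab]
    exact (zk_integrableOn hs (le_refl 1)).mono_set
      (fun x hx => lt_of_le_of_lt ha hx.1)
  · apply IntervalIntegrable.symm
    rw [intervalIntegrable_iff_integrableOn_Ioc_of_le hab.le]
    exact (zk_integrableOn hs (le_refl 1)).mono_set
      (fun x hx => lt_of_le_of_lt hb hx.1)

lemma zk_sum {s : ℂ} (hs : 0 < s.re) (hs1 : s ≠ 1) (N : ℕ) :
    s * ∫ x in (1:ℝ)..((N:ℝ)+1), zk s x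
      = 1 + 1/(s-1) - (((N:ℝ)+1:ℝ):ℂ)^(1-s)/(s-1)
        - ∑ m ∈ Finset.range (N+1), (((m:ℝ)+1:ℝ):ℂ)^(-s) := by
  have hs0 : s ≠ 0 := fun h => by simp [h] at hs
  induction N with
  | zero =>
    simp only [Nat.cast_zero, zero_add, intervalIntegral.integral_same, mul_zero,
      Finset.range_one, Finset.sum_singleton]
    norm_num [Complex.one_cpow]
  | succ N ih =>
    have h1 : IntervalIntegrable (zk s) volume 1 ((N:ℝ)+1) := zk_intervalIntegrable hs le_rfl (by linarith [Nat.cast_nonneg (α := ℝ) N])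
    have h2 : IntervalIntegrable (zk s) volume ((N:ℝ)+1) ((N:ℝ)+1+1) :=
      zk_intervalIntegrable hs (by linarith [Nat.cast_nonneg (α := ℝ) N]) (by linarith [Nat.cast_nonneg (α := ℝ) N])
    have hsplit : ∫ x in (1:ℝ)..((N:ℝ)+1+1), zk s x
        = (∫ x in (1:ℝ)..((N:ℝ)+1), zk s x) + ∫ x in ((N:ℝ)+1)..((N:ℝ)+1+1), zk s x :=
      (intervalIntegral.integral_add_adjacent_intervals h1 h2).symm
    have hint := zk_interval hs0 hs1 (n := N+1) (by omega)
    rw [Finset.sum_range_succ]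
    push_cast at ih hint ⊢
    rw [hsplit, mul_add]
    linear_combination ih + hint

noncomputable def gz (s : ℂ) : ℂ := ∫ x in Ioi (1:ℝ), zk s x

lemma cpow_tendsto {s : ℂ} (hs : 1 < s.re) :
    Tendsto (fun N : ℕ => (((N:ℝ)+1:ℝ):ℂ)^(1-s)) atTop (𝓝 0) := by
  rw [tendsto_zero_iff_norm_tendsto_zero]
  have hnorm : ∀ N : ℕ, ‖(((N:ℝ)+1:ℝ):ℂ)^(1-s)‖ = ((N:ℝ)+1) ^ (1 - s.re) := by
    intro N
    rw [Complex.norm_cpow_eq_rpow_re_of_pos (by positivity)]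
    simp
  simp only [hnorm]
  have h2 : Tendsto (fun N : ℕ => ((N:ℝ)+1)) atTop atTop :=
    tendsto_atTop_add_const_right _ 1 tendsto_natCast_atTop_atTop
  have h3 : Tendsto (fun x : ℝ => x ^ (-(s.re - 1))) atTop (𝓝 0) :=
    tendsto_rpow_neg_atTop (by linarith)
  have := h3.comp h2
  simpa [neg_sub, Function.comp_def] using this

lemma hasSum_zeta {s : ℂ} (hs : 1 < s.re) :
    HasSum (fun m : ℕ => (((m:ℝ)+1:ℝ):ℂ)^(-s)) (riemannZeta s) := by
  have hsummable : Summable (fun m : ℕ => (((m:ℝ)+1:ℝ):ℂ)^(-s)) := by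
    have h1 : Summable (fun n : ℕ => ((n:ℂ))^(-s)) := by
      have := Complex.summable_one_div_nat_cpow.mpr hs
      simpa [Complex.cpow_neg, one_div] using this
    have := (summable_nat_add_iff 1).mpr h1
    refine this.congr fun m => ?_
    push_cast
    norm_num
  refine hsummable.hasSum_iff.mpr ?_
  rw [zeta_eq_tsum_one_div_nat_add_one_cpow hs]
  congr 1
  ext m
  rw [Complex.cpow_neg, one_div]
  norm_num

lemma zeta_eq_of_one_lt {s : ℂ} (hs : 1 < s.re) :
    riemannZeta s = 1 + 1/(s-1) - s * gz s := by
  have hs1 : s ≠ 1 := fun h => by rw [h] at hs; simp at hs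
  have hs0 : 0 < s.re := by linarith
  have T1 : Tendsto (fun N : ℕ => ∫ x in (1:ℝ)..((N:ℝ)+1), zk s x) atTop (𝓝 (gz s)) := by
    apply intervalIntegral_tendsto_integral_Ioi 1 (zk_integrableOn hs0 le_rfl)
    exact tendsto_atTop_add_const_right _ 1 tendsto_natCast_atTop_atTop
  have T1' : Tendsto (fun N : ℕ => s * ∫ x in (1:ℝ)..((N:ℝ)+1), zk s x) atTop (𝓝 (s * gz s)) :=
    T1.const_mul s
  have Tsum : Tendsto (fun N : ℕ => ∑ m ∈ Finset.range (N+1), (((m:ℝ)+1:ℝ):ℂ)^(-s)) atTop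
      (𝓝 (riemannZeta s)) :=
    (hasSum_zeta hs).tendsto_sum_nat.comp (tendsto_add_atTop_nat 1)
  have T2 : Tendsto (fun N : ℕ => 1 + 1/(s-1) - (((N:ℝ)+1:ℝ):ℂ)^(1-s)/(s-1)
      - ∑ m ∈ Finset.range (N+1), (((m:ℝ)+1:ℝ):ℂ)^(-s)) atTop
      (𝓝 (1 + 1/(s-1) - 0/(s-1) - riemannZeta s)) := by
    exact (((tendsto_const_nhds).add tendsto_const_nhds).sub
      ((cpow_tendsto hs).div_const _)).sub Tsum
  have key : s * gz s = 1 + 1/(s-1) - 0/(s-1) - riemannZeta s := by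
    apply tendsto_nhds_unique _ T2
    exact Tendsto.congr (fun N => zk_sum hs0 hs1 N) T1'
  rw [zero_div] at key
  linear_combination key

lemma zeta_eq_on_line {τ : ℝ} (hτ : τ ≠ 0) :
    riemannZeta (1 + Complex.I*τ)
      = 1 + 1/(Complex.I*τ) - (1 + Complex.I*τ) * gz (1 + Complex.I*τ) := by
  set s₀ : ℂ := 1 + Complex.I*τ with hs₀
  have hne1 : s₀ ≠ 1 := by
    simp only [hs₀, Ne, add_eq_left, mul_eq_zero, Complex.I_ne_zero, false_or]
    exact_mod_cast hτ
  have hcont : Continuous fun σ : ℝ => (σ:ℂ) + Complex.I*τ := by continuity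
  have hmap : Tendsto (fun σ : ℝ => (σ:ℂ) + Complex.I*τ) (𝓝[>] (1:ℝ)) (𝓝 s₀) := by
    have := hcont.tendsto 1
    simp only [Complex.ofReal_one] at this
    exact this.mono_left nhdsWithin_le_nhds
  have hG : Tendsto (fun σ : ℝ => gz ((σ:ℂ) + Complex.I*τ)) (𝓝[>] (1:ℝ)) (𝓝 (gz s₀)) := by
    apply MeasureTheory.tendsto_integral_filter_of_dominated_convergence (bound := fun x : ℝ => x ^ (-2:ℝ))
    · exact Eventually.of_forall fun σ => zk_aesm _ 1 one_pos
    · filter_upwards [self_mem_nhdsWithin] with σ (hσ : 1 < σ)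
      filter_upwards [ae_restrict_mem measurableSet_Ioi] with x (hx : 1 < x)
      have h1 := zk_norm_le (s := (σ:ℂ) + Complex.I*τ) (lt_trans one_pos hx)
      refine h1.trans ?_
      apply Real.rpow_le_rpow_of_exponent_le hx.le
      simp only [Complex.add_re, Complex.ofReal_re, Complex.mul_re, Complex.I_re, Complex.I_im]
      simp
      linarith
    · exact integrableOn_Ioi_rpow_of_lt (by norm_num) one_pos
    · filter_upwards [ae_restrict_mem measurableSet_Ioi] with x (hx : 1 < x)
      have hx0 : (0:ℝ) < x := lt_trans one_pos hx
      have hxc : (x:ℂ) ≠ 0 := by exact_mod_cast hx0.ne'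
      have c1 : Continuous fun σ : ℝ => -((σ:ℂ) + Complex.I*τ) - 1 := by continuity
      have c2 : Tendsto (fun σ : ℝ => (x:ℂ) ^ (-((σ:ℂ) + Complex.I*τ) - 1)) (𝓝[>] (1:ℝ))
          (𝓝 ((x:ℂ) ^ (-s₀ - 1))) := by
        have hc := (continuousAt_const_cpow (b := -s₀-1) hxc).tendsto
        have := c1.tendsto 1
        simp only [Complex.ofReal_one] at this
        exact hc.comp (this.mono_left nhdsWithin_le_nhds)
      exact c2.const_mul _
  have hZ : Tendsto (fun σ : ℝ => riemannZeta ((σ:ℂ) + Complex.I*τ)) (𝓝[>] (1:ℝ))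
      (𝓝 (riemannZeta s₀)) :=
    ((differentiableAt_riemannZeta hne1).continuousAt.tendsto).comp hmap
  have hsub : Tendsto (fun σ : ℝ => ((σ:ℂ) + Complex.I*τ) - 1) (𝓝[>] (1:ℝ)) (𝓝 (s₀ - 1)) :=
    hmap.sub_const 1
  have hs₀1 : s₀ - 1 ≠ 0 := sub_ne_zero.mpr hne1
  have hRHS : Tendsto (fun σ : ℝ => 1 + 1/(((σ:ℂ) + Complex.I*τ) - 1)
      - ((σ:ℂ) + Complex.I*τ) * gz ((σ:ℂ) + Complex.I*τ)) (𝓝[>] (1:ℝ))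
      (𝓝 (1 + 1/(s₀-1) - s₀ * gz s₀)) :=
    (tendsto_const_nhds.add (tendsto_const_nhds.div hsub hs₀1)).sub (hmap.mul hG)
  have heq : ∀ᶠ σ : ℝ in 𝓝[>] (1:ℝ), riemannZeta ((σ:ℂ) + Complex.I*τ)
      = 1 + 1/(((σ:ℂ) + Complex.I*τ) - 1) - ((σ:ℂ) + Complex.I*τ) * gz ((σ:ℂ) + Complex.I*τ) := by
    filter_upwards [self_mem_nhdsWithin] with σ (hσ : 1 < σ)
    exact zeta_eq_of_one_lt (by simpa using hσ)
  have := tendsto_nhds_unique (hZ.congr' heq) hRHS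
  rw [this]
  have : s₀ - 1 = Complex.I*τ := by rw [hs₀]; ring
  rw [this]

lemma line_re (τ : ℝ) : (1 + Complex.I*τ).re = 1 := by simp

lemma line_ne_one {τ : ℝ} (hτ : τ ≠ 0) : (1 + Complex.I*τ) ≠ 1 := by
  simp only [Ne, add_eq_left, mul_eq_zero, Complex.I_ne_zero, false_or]
  exact_mod_cast hτ

lemma zeta_trunc {τ : ℝ} (hτ : τ ≠ 0) (N : ℕ) :
    riemannZeta (1 + Complex.I*τ)
      = (∑ m ∈ Finset.range (N+1), (((m:ℝ)+1:ℝ):ℂ)^(-(1 + Complex.I*τ)))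
        + (((N:ℝ)+1:ℝ):ℂ)^(1-(1 + Complex.I*τ))/(Complex.I*τ)
        - (1 + Complex.I*τ) * ∫ x in Ioi ((N:ℝ)+1), zk (1 + Complex.I*τ) x := by
  set s : ℂ := 1 + Complex.I*τ with hs
  have hre : s.re = 1 := line_re τ
  have hrepos : 0 < s.re := by rw [hre]; norm_num
  have hne1 : s ≠ 1 := line_ne_one hτ
  have hN1 : (1:ℝ) ≤ (N:ℝ)+1 := by linarith [Nat.cast_nonneg (α := ℝ) N]
  have hsplit : gz s = (∫ x in Ioc (1:ℝ) ((N:ℝ)+1), zk s x) + ∫ x in Ioi ((N:ℝ)+1), zk s x := by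
    rw [gz, ← Ioc_union_Ioi_eq_Ioi hN1]
    exact setIntegral_union (Ioc_disjoint_Ioi le_rfl) measurableSet_Ioi
      ((zk_integrableOn hrepos le_rfl).mono_set
        (fun x hx => lt_of_lt_of_le hx.1 le_rfl))
      (zk_integrableOn hrepos hN1)
  have hioc : ∫ x in Ioc (1:ℝ) ((N:ℝ)+1), zk s x = ∫ x in (1:ℝ)..((N:ℝ)+1), zk s x :=
    (intervalIntegral.integral_of_le hN1).symm
  have hsum := zk_sum hrepos hne1 N
  have hline := zeta_eq_on_line hτ
  rw [← hs] at hline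
  have hs1 : s - 1 = Complex.I*τ := by rw [hs]; ring
  have hτc : (Complex.I*(τ:ℂ)) ≠ 0 := by
    simp only [Ne, mul_eq_zero, Complex.I_ne_zero, false_or]
    exact_mod_cast hτ
  rw [hsplit, hioc] at hline
  rw [hs1] at hsum
  linear_combination hline - hsum

lemma zeta_line_bound {τ : ℝ} (hτ : τ ≠ 0) :
    ‖riemannZeta (1 + Complex.I*τ)‖ ≤ 3 + Real.log (3+|τ|) + 1/|τ| := by
  set s : ℂ := 1 + Complex.I*τ with hs
  have hre : s.re = 1 := line_re τ
  have hτpos : 0 < |τ| := abs_pos.mpr hτ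
  set N : ℕ := ⌊|τ|⌋₊ with hN
  have hK1 : (1:ℝ) ≤ (N:ℝ)+1 := by linarith [Nat.cast_nonneg (α := ℝ) N]
  have hKτ : |τ| ≤ (N:ℝ)+1 := (Nat.lt_floor_add_one |τ|).le
  have hKτ' : (N:ℝ)+1 ≤ |τ|+1 := by
    have := Nat.floor_le (le_of_lt hτpos)
    linarith
  have hKpos : (0:ℝ) < (N:ℝ)+1 := by linarith
  rw [zeta_trunc hτ N]
  have normI : ‖Complex.I*(τ:ℂ)‖ = |τ| := by
    rw [norm_mul, Complex.norm_I, one_mul, Complex.norm_real, Real.norm_eq_abs]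
  -- piece 1
  have h1 : ‖∑ m ∈ Finset.range (N+1), (((m:ℝ)+1:ℝ):ℂ)^(-s)‖ ≤ 1 + Real.log (3+|τ|) := by
    calc ‖∑ m ∈ Finset.range (N+1), (((m:ℝ)+1:ℝ):ℂ)^(-s)‖
        ≤ ∑ m ∈ Finset.range (N+1), ‖(((m:ℝ)+1:ℝ):ℂ)^(-s)‖ := norm_sum_le _ _
      _ = ∑ m ∈ Finset.range (N+1), ((m:ℝ)+1)⁻¹ := by
          apply Finset.sum_congr rfl
          intro m _
          rw [Complex.norm_cpow_eq_rpow_re_of_pos (by positivity : (0:ℝ) < (m:ℝ)+1)]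
          rw [Complex.neg_re, hre]
          rw [show -(1:ℝ) = ((-1 : ℤ) : ℝ) by norm_num, Real.rpow_intCast]
          simp
      _ = ((harmonic (N+1) : ℚ) : ℝ) := by
          rw [harmonic]
          push_cast
          rfl
      _ ≤ 1 + Real.log ((N:ℝ)+1) := by
          have := harmonic_le_one_add_log (N+1)
          push_cast at this ⊢
          convert this using 3
      _ ≤ 1 + Real.log (3+|τ|) := by
          have : ((N:ℝ)+1) ≤ 3+|τ| := by linarith
          have hlog := Real.log_le_log hKpos this
          linarith
  -- piece 2
  have h2 : ‖(((N:ℝ)+1:ℝ):ℂ)^(1-s)/(Complex.I*(τ:ℂ))‖ = 1/|τ| := by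
    rw [norm_div, normI]
    congr 1
    rw [Complex.norm_cpow_eq_rpow_re_of_pos hKpos]
    rw [show (1-s).re = 0 by rw [Complex.sub_re, Complex.one_re, hre]; ring]
    exact Real.rpow_zero _
  -- piece 3
  have h3 : ‖s * ∫ x in Ioi ((N:ℝ)+1), zk s x‖ ≤ 2 := by
    rw [norm_mul]
    have hsle : ‖s‖ ≤ 1 + |τ| := by
      calc ‖s‖ ≤ ‖(1:ℂ)‖ + ‖Complex.I*(τ:ℂ)‖ := norm_add_le _ _
        _ = 1 + |τ| := by rw [norm_one, normI]
    have hintle : ‖∫ x in Ioi ((N:ℝ)+1), zk s x‖ ≤ ((N:ℝ)+1)⁻¹ := by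
      have hb : ‖∫ x in Ioi ((N:ℝ)+1), zk s x‖ ≤ ∫ x in Ioi ((N:ℝ)+1), x ^ (-2:ℝ) := by
        apply MeasureTheory.norm_integral_le_of_norm_le
        · exact integrableOn_Ioi_rpow_of_lt (by norm_num) hKpos
        · filter_upwards [ae_restrict_mem measurableSet_Ioi] with x hx
          have hx0 : (0:ℝ) < x := lt_trans hKpos hx
          have := zk_norm_le (s := s) hx0
          rw [hre] at this
          convert this using 2
          norm_num
      rw [integral_Ioi_rpow_of_lt (by norm_num) hKpos] at hb
      calc ‖∫ x in Ioi ((N:ℝ)+1), zk s x‖ ≤ -((N:ℝ)+1) ^ (-2+1:ℝ) / (-2+1) := hb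
        _ = ((N:ℝ)+1)⁻¹ := by
            norm_num
            rw [show (-1:ℝ) = ((-1 : ℤ) : ℝ) by norm_num, Real.rpow_intCast]
            simp
    calc ‖s‖ * ‖∫ x in Ioi ((N:ℝ)+1), zk s x‖ ≤ (1+|τ|) * ((N:ℝ)+1)⁻¹ := by
          apply mul_le_mul hsle hintle (norm_nonneg _) (by positivity)
      _ ≤ 2 := by
          rw [mul_inv_le_iff₀ hKpos]
          linarith
  calc ‖(∑ m ∈ Finset.range (N+1), (((m:ℝ)+1:ℝ):ℂ)^(-s))
        + (((N:ℝ)+1:ℝ):ℂ)^(1-s)/(Complex.I*(τ:ℂ))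
        - s * ∫ x in Ioi ((N:ℝ)+1), zk s x‖
      ≤ ‖(∑ m ∈ Finset.range (N+1), (((m:ℝ)+1:ℝ):ℂ)^(-s))
          + (((N:ℝ)+1:ℝ):ℂ)^(1-s)/(Complex.I*(τ:ℂ))‖
        + ‖s * ∫ x in Ioi ((N:ℝ)+1), zk s x‖ := norm_sub_le _ _
    _ ≤ ‖∑ m ∈ Finset.range (N+1), (((m:ℝ)+1:ℝ):ℂ)^(-s)‖
        + ‖(((N:ℝ)+1:ℝ):ℂ)^(1-s)/(Complex.I*(τ:ℂ))‖
        + ‖s * ∫ x in Ioi ((N:ℝ)+1), zk s x‖ := by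
          gcongr
          exact norm_add_le _ _
    _ ≤ (1 + Real.log (3+|τ|)) + 1/|τ| + 2 := by
          rw [h2]
          gcongr
    _ = 3 + Real.log (3+|τ|) + 1/|τ| := by ring

lemma exp_I_sub_one_le_two (θ : ℝ) : ‖Complex.exp (Complex.I*θ) - 1‖ ≤ 2 := by
  calc ‖Complex.exp (Complex.I*θ) - 1‖ ≤ ‖Complex.exp (Complex.I*θ)‖ + ‖(1:ℂ)‖ := norm_sub_le _ _
    _ ≤ 2 := by
        rw [Complex.norm_exp,
          show (Complex.I*(θ:ℂ)).re = 0 by simp, Real.exp_zero, norm_one]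
        norm_num

lemma exp_I_sub_one_le_abs (θ : ℝ) : ‖Complex.exp (Complex.I*θ) - 1‖ ≤ |θ| := by
  rw [mul_comm, Complex.exp_mul_I]
  have hre : (Complex.cos (θ:ℂ) + Complex.sin (θ:ℂ) * Complex.I - 1).re = Real.cos θ - 1 := by
    simp [Complex.sub_re, Complex.add_re, Complex.mul_re, Complex.I_re, Complex.I_im,
      Complex.cos_ofReal_re, Complex.sin_ofReal_im]
  have him : (Complex.cos (θ:ℂ) + Complex.sin (θ:ℂ) * Complex.I - 1).im = Real.sin θ := by
    simp [Complex.sub_im, Complex.add_im, Complex.mul_im, Complex.I_re, Complex.I_im,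
      Complex.sin_ofReal_re, Complex.cos_ofReal_im]
  rw [Complex.norm_def, Complex.normSq_apply, hre, him]
  have h1 : (Real.cos θ - 1) * (Real.cos θ - 1) + Real.sin θ * Real.sin θ ≤ θ^2 := by
    have h2 := Real.one_sub_sq_div_two_le_cos (x := θ)
    nlinarith [Real.sin_sq_add_cos_sq θ]
  calc Real.sqrt ((Real.cos θ - 1) * (Real.cos θ - 1) + Real.sin θ * Real.sin θ)
      ≤ Real.sqrt (θ^2) := Real.sqrt_le_sqrt h1
    _ = |θ| := Real.sqrt_sq_eq_abs θ

/-- There is an absolute constant `C > 0` such that for every prime `p`, all integers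
`d ≥ 1`, `k ≥ 1`, and every real `t ≠ 0` (with `T = 3 + |t|`):
`| (p^{2it}-1)/p · ζ(1-2it)/(2π√(d/p))^{1-2it} · Γ(k-it)/Γ(k+it) | ≤ C log(pT)/√(dp)`. -/
theorem E3_bound :
    ∃ C : ℝ, 0 < C ∧ ∀ (p d k : ℕ) (t : ℝ), p.Prime → 1 ≤ d → 1 ≤ k → t ≠ 0 →
      ‖(Complex.exp (2 * Complex.I * t * Real.log p) - 1) / (p : ℂ) *
          (riemannZeta (1 - 2 * Complex.I * t) /
            Complex.exp ((1 - 2 * Complex.I * t) *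
              Real.log (2 * Real.pi * Real.sqrt ((d : ℝ) / p)))) *
          (Complex.Gamma ((k : ℂ) - Complex.I * t) / Complex.Gamma ((k : ℂ) + Complex.I * t))‖
        ≤ C * Real.log ((p : ℝ) * (3 + |t|)) / Real.sqrt ((d : ℝ) * p) := by
  refine ⟨10, by norm_num, ?_⟩
  intro p d k t hp hd hk ht
  have hp2 : (2:ℝ) ≤ p := by exact_mod_cast hp.two_le
  have hp0 : (0:ℝ) < p := by linarith
  have hd0 : (0:ℝ) < d := by exact_mod_cast hd
  have hk1 : (1:ℝ) ≤ k := by exact_mod_cast hk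
  set τ : ℝ := -2*t with hτdef
  have hτ : τ ≠ 0 := by simp [hτdef, ht]
  have hτabs : |τ| = 2*|t| := by rw [hτdef, abs_mul]; norm_num
  set θ : ℝ := 2*t*Real.log p with hθdef
  have a1 : 1 - 2*Complex.I*(t:ℂ) = 1 + Complex.I*(τ:ℂ) := by
    rw [hτdef]; push_cast; ring
  have a2 : 2*Complex.I*(t:ℂ)*((Real.log p : ℝ):ℂ) = Complex.I*(θ:ℂ) := by
    rw [hθdef]; push_cast; ring
  set R : ℝ := 2 * Real.pi * Real.sqrt ((d:ℝ)/p) with hRdef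
  have hR0 : 0 < R := by
    rw [hRdef]
    have : 0 < (d:ℝ)/p := div_pos hd0 hp0
    positivity
  -- norm of exponential denominator
  have n1 : ‖Complex.exp ((1 + Complex.I*(τ:ℂ)) * ((Real.log R : ℝ):ℂ))‖ = R := by
    rw [Complex.norm_exp]
    have : ((1 + Complex.I*(τ:ℂ)) * ((Real.log R : ℝ):ℂ)).re = Real.log R := by
      simp [Complex.mul_re, Complex.add_re, Complex.add_im]
    rw [this, Real.exp_log hR0]
  -- norm of Gamma ratio
  have n2 : ‖Complex.Gamma ((k:ℂ) - Complex.I*(t:ℂ)) / Complex.Gamma ((k:ℂ) + Complex.I*(t:ℂ))‖ = 1 := by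
    have hconj : (starRingEnd ℂ) ((k:ℂ) + Complex.I*(t:ℂ)) = (k:ℂ) - Complex.I*(t:ℂ) := by
      rw [map_add, map_mul, Complex.conj_I, Complex.conj_ofReal]
      push_cast
      simp [Complex.ext_iff]
    have hne : Complex.Gamma ((k:ℂ) + Complex.I*(t:ℂ)) ≠ 0 := by
      apply Complex.Gamma_ne_zero_of_re_pos
      simp only [Complex.add_re, Complex.natCast_re, Complex.mul_re, Complex.I_re,
        Complex.I_im, Complex.ofReal_re, Complex.ofReal_im]
      norm_num
      linarith
    rw [norm_div, ← hconj, Complex.Gamma_conj]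
    rw [Complex.norm_conj]
    rw [div_self (norm_ne_zero_iff.mpr hne)]
  -- key numeric bounds
  set E : ℝ := ‖Complex.exp (Complex.I*(θ:ℂ)) - 1‖ with hE
  set Z : ℝ := ‖riemannZeta (1 + Complex.I*(τ:ℂ))‖ with hZ
  have hE2 : E ≤ 2 := exp_I_sub_one_le_two θ
  have hlogp0' : 0 ≤ Real.log p := Real.log_nonneg (by linarith)
  have hEθ : E ≤ 2*|t| * Real.log p := by
    have h0 := exp_I_sub_one_le_abs θ
    have habs : |θ| = 2*|t| * Real.log p := by
      rw [hθdef, abs_mul, abs_of_nonneg hlogp0', abs_mul, abs_two]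
    rw [habs] at h0
    exact h0
  have hZb : Z ≤ 3 + Real.log (3+|τ|) + 1/|τ| := zeta_line_bound hτ
  have hlog2 : Real.log (3+|τ|) ≤ 2 * Real.log (3+|t|) := by
    have h1 : 3+|τ| ≤ (3+|t|)^2 := by
      rw [hτabs]
      nlinarith [abs_nonneg t]
    calc Real.log (3+|τ|) ≤ Real.log ((3+|t|)^2) :=
          Real.log_le_log (by positivity) h1
      _ = 2 * Real.log (3+|t|) := by
          rw [Real.log_pow]; push_cast; ring
  have hlog3 : 1 ≤ Real.log (3+|t|) := by
    have h1 : Real.exp 1 < 3 := by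
      have := Real.exp_one_lt_d9
      linarith
    have h2 : 1 < Real.log 3 := (Real.lt_log_iff_exp_lt (by norm_num)).mpr h1
    have h3 : Real.log 3 ≤ Real.log (3+|t|) :=
      Real.log_le_log (by norm_num) (by linarith [abs_nonneg t])
    linarith
  have hlogp0 : 0 ≤ Real.log p := Real.log_nonneg (by linarith)
  have hzpos : 0 ≤ Z := norm_nonneg _
  have hEpos : 0 ≤ E := norm_nonneg _
  set L : ℝ := Real.log ((p:ℝ) * (3 + |t|)) with hL
  have hLsplit : L = Real.log p + Real.log (3+|t|) := by
    rw [hL, Real.log_mul (by positivity) (by positivity)]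
  have hL1 : 1 ≤ L := by rw [hLsplit]; linarith
  -- main product bound
  have hEZ : E * Z ≤ 10 * L := by
    have hτinv : E * (1/|τ|) ≤ Real.log p := by
      rw [hτabs]
      rcases eq_or_lt_of_le (abs_nonneg t) with h|h
      · exact absurd h.symm (abs_ne_zero.mpr ht)
      calc E * (1/(2*|t|)) ≤ (2*|t| * Real.log p) * (1/(2*|t|)) := by
            apply mul_le_mul_of_nonneg_right hEθ (by positivity)
        _ = Real.log p := by field_simp
    calc E * Z ≤ E * (3 + Real.log (3+|τ|) + 1/|τ|) :=
          mul_le_mul_of_nonneg_left hZb hEpos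
      _ = E * (3 + Real.log (3+|τ|)) + E * (1/|τ|) := by ring
      _ ≤ 2 * (3 + Real.log (3+|τ|)) + Real.log p := by
          gcongr
          · have : (0:ℝ) ≤ Real.log (3+|τ|) := Real.log_nonneg (by linarith [abs_nonneg τ])
            linarith
      _ ≤ 2 * (3 + 2*Real.log (3+|t|)) + Real.log p := by linarith
      _ = 6 + 4*Real.log (3+|t|) + Real.log p := by ring
      _ ≤ 6*Real.log (3+|t|) + 4*Real.log (3+|t|) + Real.log p := by linarith
      _ ≤ 10 * L := by rw [hLsplit]; linarith
  -- assemble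
  rw [a1, a2]
  rw [norm_mul, norm_mul, n2, norm_div, norm_div, n1]
  rw [Complex.norm_natCast]
  rw [← hE, ← hZ]
  have hsqdp : 0 < Real.sqrt ((d:ℝ)*p) := Real.sqrt_pos.mpr (by positivity)
  have hpR : (p:ℝ) * R = 2 * Real.pi * Real.sqrt ((d:ℝ)*p) := by
    have hsd : Real.sqrt ((d:ℝ)/p) = Real.sqrt d / Real.sqrt p := Real.sqrt_div hd0.le _
    have hmul : Real.sqrt ((d:ℝ)*p) = Real.sqrt d * Real.sqrt p := Real.sqrt_mul hd0.le _
    have h1 : Real.sqrt (p:ℝ) * Real.sqrt (p:ℝ) = (p:ℝ) := Real.mul_self_sqrt hp0.le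
    have h2 : (0:ℝ) < Real.sqrt p := Real.sqrt_pos.mpr hp0
    rw [hRdef, hsd, hmul]
    field_simp
    linear_combination (-1:ℝ) * h1
  rw [mul_one, div_mul_div_comm, hpR]
  rw [div_le_div_iff₀ (by positivity) hsqdp]
  have hπ : 1 ≤ 2 * Real.pi := by nlinarith [Real.pi_gt_three]
  calc E * Z * Real.sqrt ((d:ℝ)*p) ≤ (10*L) * Real.sqrt ((d:ℝ)*p) :=
        mul_le_mul_of_nonneg_right hEZ hsqdp.le
    _ = (10*L) * (1 * Real.sqrt ((d:ℝ)*p)) := by ring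
    _ ≤ (10*L) * (2*Real.pi * Real.sqrt ((d:ℝ)*p)) := by
        apply mul_le_mul_of_nonneg_left _ (by linarith : (0:ℝ) ≤ 10*L)
        apply mul_le_mul_of_nonneg_right hπ hsqdp.le
    _ = 10 * L * (2*Real.pi*Real.sqrt ((d:ℝ)*p)) := by ring
end

section
/- Let \(q\) and \(P\) be positive integers and let \(s\in\mathbb{C}\) with \(\mathrm{Re}\,s>1\). Then \(\sum_{\substack{b=1\\ \gcd(b,qP)=1}}^{qP}\;\sum_{n=1}^{\infty}\frac{e^{2\pi i\,nb/q}}{n^{s}} \;=\; \zeta(s)\,\phi(qP)\sum_{m\mid q}\frac{\mu(m)}{\phi(m)}\Bigl(\frac{m}{q}\Bigr)^{s}\sum_{a\mid m}\frac{\mu(a)}{a^{s}}\), where the double sum on the left converges absolutely. -/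
set_option maxHeartbeats 1000000

open Finset ArithmeticFunction
open scoped ArithmeticFunction.Moebius ArithmeticFunction.zeta

namespace LerchAux

/-- Möbius restricted to numbers coprime to `c`, as a `ℚ`-valued arithmetic function. -/
def muC (c : ℕ) : ArithmeticFunction ℚ :=
  ⟨fun u => if Nat.Coprime u c then ((μ u : ℤ) : ℚ) else 0, by simp⟩

lemma muC_apply (c u : ℕ) : muC c u = if Nat.Coprime u c then ((μ u : ℤ) : ℚ) else 0 := rfl

lemma isMultiplicative_muC (c : ℕ) : (muC c).IsMultiplicative := by
  constructor
  · simp [muC_apply, Nat.coprime_one_left]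
  · intro m n hmn
    simp only [muC_apply]
    by_cases h1 : Nat.Coprime m c
    · by_cases h2 : Nat.Coprime n c
      · rw [if_pos (Nat.Coprime.mul h1 h2), if_pos h1, if_pos h2,
          isMultiplicative_moebius.map_mul_of_coprime hmn]
        push_cast
        ring
      · rw [if_neg h2, mul_zero, if_neg]
        rw [Nat.coprime_mul_iff_left]
        tauto
    · rw [if_neg h1, zero_mul, if_neg]
      rw [Nat.coprime_mul_iff_left]
      tauto

/-- `N ↦ φ(cN)/φ(c)` as a `ℚ`-valued arithmetic function. -/
def totR (c : ℕ) : ArithmeticFunction ℚ :=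
  ⟨fun N => if N = 0 then 0 else (Nat.totient (c * N) : ℚ) / (Nat.totient c : ℚ), by simp⟩

lemma totR_apply (c N : ℕ) :
    totR c N = if N = 0 then 0 else (Nat.totient (c * N) : ℚ) / (Nat.totient c : ℚ) := rfl

lemma totient_mul_mul (c : ℕ) (hc : c ≠ 0) {m n : ℕ} (h : Nat.Coprime m n) :
    Nat.totient (c * (m * n)) * Nat.totient c
      = Nat.totient (c * m) * Nat.totient (c * n) := by
  have hg : Nat.gcd (c * m) n = Nat.gcd c n := Nat.Coprime.gcd_mul_right_cancel c h
  have h1 := Nat.totient_gcd_mul_totient_mul (c * m) n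
  rw [hg] at h1
  have h2 := Nat.totient_gcd_mul_totient_mul c n
  have hd : 0 < Nat.totient (Nat.gcd c n) := by
    rw [Nat.totient_pos]
    exact Nat.pos_of_ne_zero fun h0 => hc (Nat.eq_zero_of_gcd_eq_zero_left h0)
  apply Nat.eq_of_mul_eq_mul_left hd
  calc Nat.totient (Nat.gcd c n) * (Nat.totient (c * (m * n)) * Nat.totient c)
      = (Nat.totient (Nat.gcd c n) * Nat.totient (c * m * n)) * Nat.totient c := by
        rw [mul_assoc c m n]; ring
    _ = (Nat.totient (c * m) * Nat.totient n * Nat.gcd c n) * Nat.totient c := by rw [h1]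
    _ = Nat.totient (c * m) * (Nat.totient c * Nat.totient n * Nat.gcd c n) := by ring
    _ = Nat.totient (c * m) * (Nat.totient (Nat.gcd c n) * Nat.totient (c * n)) := by rw [h2]
    _ = Nat.totient (Nat.gcd c n) * (Nat.totient (c * m) * Nat.totient (c * n)) := by ring

lemma isMultiplicative_totR (c : ℕ) (hc : c ≠ 0) : (totR c).IsMultiplicative := by
  have hφc : (Nat.totient c : ℚ) ≠ 0 := by
    exact_mod_cast (Nat.totient_pos.mpr (Nat.pos_of_ne_zero hc)).ne'
  constructor
  · simp [totR_apply, hφc]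
  · intro m n hmn
    rcases eq_or_ne m 0 with rfl | hm
    · simp [totR_apply]
    rcases eq_or_ne n 0 with rfl | hn
    · simp [totR_apply]
    have hmn0 : m * n ≠ 0 := mul_ne_zero hm hn
    simp only [totR_apply, if_neg hm, if_neg hn, if_neg hmn0]
    rw [div_mul_div_comm, div_eq_div_iff hφc (mul_ne_zero hφc hφc)]
    have h2 : ((c * m * n).totient : ℚ) * c.totient
        = ((c * m).totient : ℚ) * ((c * n).totient : ℚ) := by
      rw [mul_assoc]; exact_mod_cast totient_mul_mul c hc hmn
    rw [show c * (m * n) = c * m * n from (mul_assoc c m n).symm, ← mul_assoc, h2]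

end LerchAux

namespace LerchAux
open Finset ArithmeticFunction

lemma totient_mul_prime_pow_dvd {p : ℕ} (hp : p.Prime) {c : ℕ} (hpc : p ∣ c) (k : ℕ) :
    Nat.totient (c * p ^ k) = p ^ k * Nat.totient c := by
  induction k with
  | zero => simp
  | succ k ih =>
    have h1 : c * p ^ (k + 1) = p * (c * p ^ k) := by ring
    rw [h1, Nat.totient_mul_of_prime_of_dvd hp (Dvd.dvd.mul_right hpc _), ih]
    ring

lemma muC_mul_id_eq_totR (c : ℕ) (hc : c ≠ 0) :
    muC c * (↑(ArithmeticFunction.id) : ArithmeticFunction ℚ) = totR c := by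
  have hφc : (Nat.totient c : ℚ) ≠ 0 := by
    exact_mod_cast (Nat.totient_pos.mpr (Nat.pos_of_ne_zero hc)).ne'
  have hmul : ((muC c) * ↑(ArithmeticFunction.id)).IsMultiplicative :=
    (isMultiplicative_muC c).mul (isMultiplicative_id.natCast)
  rw [ArithmeticFunction.IsMultiplicative.eq_iff_eq_on_prime_powers _ hmul _ (isMultiplicative_totR c hc)]
  intro p k hp
  rcases Nat.eq_zero_or_pos k with rfl | hk
  · rw [pow_zero, hmul.map_one, (isMultiplicative_totR c hc).map_one]
  have hL : ((muC c) * ↑(ArithmeticFunction.id)) (p ^ k)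
      = ∑ i ∈ Finset.range (k + 1), muC c (p ^ i) * ((p ^ k / p ^ i : ℕ) : ℚ) := by
    rw [mul_apply]
    rw [show (∑ x ∈ (p ^ k).divisorsAntidiagonal,
        muC c x.1 * (↑(ArithmeticFunction.id) : ArithmeticFunction ℚ) x.2)
      = ∑ x ∈ (p ^ k).divisorsAntidiagonal, muC c x.1 * ((x.2 : ℕ) : ℚ) from by
        refine Finset.sum_congr rfl fun x _ => ?_
        rw [natCoe_apply, id_apply]]
    rw [Nat.sum_divisorsAntidiagonal (f := fun i j => muC c i * ((j : ℕ) : ℚ))]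
    exact Nat.sum_divisors_prime_pow hp
  have hsub : ({0, 1} : Finset ℕ) ⊆ Finset.range (k + 1) := by
    intro x hx
    simp only [Finset.mem_insert, Finset.mem_singleton] at hx
    rcases hx with rfl | rfl <;> simp [Finset.mem_range] <;> omega
  have hvan : ∀ x ∈ Finset.range (k + 1), x ∉ ({0, 1} : Finset ℕ) →
      muC c (p ^ x) * ((p ^ k / p ^ x : ℕ) : ℚ) = 0 := by
    intro x _ hx
    simp only [Finset.mem_insert, Finset.mem_singleton, not_or] at hx
    rw [muC_apply, moebius_apply_prime_pow hp hx.1, if_neg hx.2]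
    simp
  rw [hL, ← Finset.sum_subset hsub hvan, Finset.sum_pair (by norm_num : (0 : ℕ) ≠ 1)]
  have hdiv1 : p ^ k / p ^ 0 = p ^ k := by simp
  have hdiv2 : p ^ k / p ^ 1 = p ^ (k - 1) := Nat.pow_div hk hp.pos
  have hμ1 : muC c (p ^ 0) = 1 := by
    simp [muC_apply, Nat.coprime_one_left]
  have hμp : muC c (p ^ 1) = if Nat.Coprime p c then -1 else 0 := by
    rw [muC_apply, pow_one, moebius_apply_prime hp]
    split_ifs <;> simp
  rw [hdiv1, hdiv2, hμ1, hμp, totR_apply, if_neg (pow_ne_zero _ hp.pos.ne')]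
  have hpk : (p : ℚ) ^ (k - 1) * p = (p : ℚ) ^ k := by
    rw [← pow_succ, Nat.sub_add_cancel hk]
  by_cases hpc : p ∣ c
  · rw [if_neg (by rw [hp.coprime_iff_not_dvd]; exact fun h => h hpc)]
    rw [totient_mul_prime_pow_dvd hp hpc k]
    push_cast
    field_simp
    ring
  · rw [if_pos ((hp.coprime_iff_not_dvd).mpr hpc)]
    have hcop : Nat.Coprime c (p ^ k) :=
      (Nat.Coprime.pow_right k (((hp.coprime_iff_not_dvd).mpr hpc).symm))
    rw [Nat.totient_mul hcop, Nat.totient_prime_pow hp hk]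
    push_cast [Nat.cast_sub hp.one_lt.le]
    field_simp
    linear_combination (-1 : ℚ) * hpk

/-- The key totient identity. -/
lemma key_totient (c N : ℕ) (hc : c ≠ 0) (hN : N ≠ 0) :
    (Nat.totient (c * N) : ℚ) = (Nat.totient c : ℚ) *
      ∑ u ∈ N.divisors,
        (if Nat.Coprime u c then ((μ u : ℤ) : ℚ) else 0) * ((N / u : ℕ) : ℚ) := by
  have hφc : (Nat.totient c : ℚ) ≠ 0 := by
    exact_mod_cast (Nat.totient_pos.mpr (Nat.pos_of_ne_zero hc)).ne'
  have h := congrArg (fun f : ArithmeticFunction ℚ => f N) (muC_mul_id_eq_totR c hc)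
  have hL : ((muC c) * ↑(ArithmeticFunction.id)) N
      = ∑ u ∈ N.divisors,
        (if Nat.Coprime u c then ((μ u : ℤ) : ℚ) else 0) * ((N / u : ℕ) : ℚ) := by
    rw [mul_apply]
    rw [show (∑ x ∈ N.divisorsAntidiagonal,
        muC c x.1 * (↑(ArithmeticFunction.id) : ArithmeticFunction ℚ) x.2)
      = ∑ x ∈ N.divisorsAntidiagonal, muC c x.1 * ((x.2 : ℕ) : ℚ) from by
        refine Finset.sum_congr rfl fun x _ => ?_
        rw [natCoe_apply, id_apply]]
    exact Nat.sum_divisorsAntidiagonal (f := fun i j => muC c i * ((j : ℕ) : ℚ))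
  rw [hL, totR_apply, if_neg hN] at h
  rw [h]
  field_simp

end LerchAux

namespace LerchAux
open Finset ArithmeticFunction

lemma ramanujan_like {M m : ℕ} (hM : M ≠ 0) (hm : m ∣ M) :
    ∑ t ∈ M.divisors.filter (fun t => m ∣ t), ((μ t : ℤ) : ℚ) * ((M / t : ℕ) : ℚ)
      = ((μ m : ℤ) : ℚ) * (Nat.totient M : ℚ) / (Nat.totient m : ℚ) := by
  have hm0 : m ≠ 0 := by
    rintro rfl
    exact hM (Nat.eq_zero_of_zero_dvd hm)
  set N := M / m with hNdef
  have hMN : m * N = M := Nat.mul_div_cancel' hm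
  have hN0 : N ≠ 0 := by
    intro h; rw [h, mul_zero] at hMN; exact hM hMN.symm
  have hre : ∑ t ∈ M.divisors.filter (fun t => m ∣ t), ((μ t : ℤ) : ℚ) * ((M / t : ℕ) : ℚ)
      = ∑ u ∈ N.divisors, ((μ (m * u) : ℤ) : ℚ) * ((N / u : ℕ) : ℚ) := by
    refine Finset.sum_nbij' (fun t => t / m) (fun u => m * u) ?_ ?_ ?_ ?_ ?_
    · intro t ht
      obtain ⟨htM, hmt⟩ := Finset.mem_filter.mp ht
      obtain ⟨htdvd, -⟩ := Nat.mem_divisors.mp htM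
      obtain ⟨v, rfl⟩ := hmt
      show m * v / m ∈ N.divisors
      rw [Nat.mul_div_cancel_left v (Nat.pos_of_ne_zero hm0)]
      rw [Nat.mem_divisors]
      refine ⟨?_, hN0⟩
      rw [← hMN] at htdvd
      exact (mul_dvd_mul_iff_left hm0).mp htdvd
    · intro u hu
      obtain ⟨hudvd, -⟩ := Nat.mem_divisors.mp hu
      rw [Finset.mem_filter, Nat.mem_divisors]
      exact ⟨⟨by rw [← hMN]; exact mul_dvd_mul_left m hudvd, hM⟩, Dvd.intro u rfl⟩
    · intro t ht
      obtain ⟨-, hmt⟩ := Finset.mem_filter.mp ht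
      exact Nat.mul_div_cancel' hmt
    · intro u hu
      exact Nat.mul_div_cancel_left u (Nat.pos_of_ne_zero hm0)
    · intro t ht
      obtain ⟨-, hmt⟩ := Finset.mem_filter.mp ht
      obtain ⟨v, rfl⟩ := hmt
      show ((μ (m * v) : ℤ) : ℚ) * ((M / (m * v) : ℕ) : ℚ)
        = ((μ (m * (m * v / m)) : ℤ) : ℚ) * ((N / (m * v / m) : ℕ) : ℚ)
      rw [Nat.mul_div_cancel_left v (Nat.pos_of_ne_zero hm0), ← hMN,
        Nat.mul_div_mul_left N v (Nat.pos_of_ne_zero hm0)]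
  rw [hre]
  have hterm : ∀ u, ((μ (m * u) : ℤ) : ℚ)
      = ((μ m : ℤ) : ℚ) * (if Nat.Coprime u m then ((μ u : ℤ) : ℚ) else 0) := by
    intro u
    by_cases hc : Nat.Coprime u m
    · rw [if_pos hc, isMultiplicative_moebius.map_mul_of_coprime hc.symm]
      push_cast; ring
    · rw [if_neg hc, mul_zero, moebius_eq_zero_of_not_squarefree, Int.cast_zero]
      rw [Nat.squarefree_mul_iff]
      intro h
      exact hc h.1.symm
  calc ∑ u ∈ N.divisors, ((μ (m * u) : ℤ) : ℚ) * ((N / u : ℕ) : ℚ)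
      = ((μ m : ℤ) : ℚ) * ∑ u ∈ N.divisors,
          (if Nat.Coprime u m then ((μ u : ℤ) : ℚ) else 0) * ((N / u : ℕ) : ℚ) := by
        rw [Finset.mul_sum]
        refine Finset.sum_congr rfl fun u _ => ?_
        rw [hterm u]; ring
    _ = ((μ m : ℤ) : ℚ) * ((Nat.totient (m * N) : ℚ) / (Nat.totient m : ℚ)) := by
        have hφm : (Nat.totient m : ℚ) ≠ 0 := by
          exact_mod_cast (Nat.totient_pos.mpr (Nat.pos_of_ne_zero hm0)).ne'
        rw [key_totient m N hm0 hN0]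
        field_simp
    _ = ((μ m : ℤ) : ℚ) * (Nat.totient M : ℚ) / (Nat.totient m : ℚ) := by
        rw [hMN]; ring

lemma natCast_div_cpow (s : ℂ) (hs : s ≠ 0) (m q : ℕ) (hq : q ≠ 0) :
    ((m : ℂ) / (q : ℂ)) ^ s = (m : ℂ) ^ s / (q : ℂ) ^ s := by
  have hq' : ((q : ℂ)) ^ s ≠ 0 := by
    simp only [ne_eq, Complex.cpow_eq_zero_iff, not_and_or, not_not]
    left
    exact_mod_cast hq
  rcases eq_or_ne m 0 with rfl | hm
  · simp [Complex.zero_cpow hs]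
  have hqR : (0 : ℝ) < (q : ℝ) := by exact_mod_cast Nat.pos_of_ne_zero hq
  have h := Complex.mul_cpow_ofReal_nonneg (a := (m : ℝ) / q) (b := (q : ℝ))
    (by positivity) (by positivity) s
  push_cast at h
  rw [div_mul_cancel₀ _ (show (q : ℂ) ≠ 0 by exact_mod_cast hq)] at h
  rw [eq_div_iff hq']
  exact h.symm

lemma sum_cpow_moebius (s : ℂ) (hs : s ≠ 0) {g : ℕ} (hg : g ≠ 0) :
    ∑ m ∈ g.divisors, (m : ℂ) ^ s *
      ∑ a ∈ m.divisors, ((μ a : ℤ) : ℂ) / (a : ℂ) ^ s = (g : ℂ) ^ s := by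
  set A : ArithmeticFunction ℂ := ⟨fun n => (n : ℂ) ^ s, by simp [Complex.zero_cpow hs]⟩ with hA
  have hstep : ∀ m ∈ g.divisors, (m : ℂ) ^ s * ∑ a ∈ m.divisors, ((μ a : ℤ) : ℂ) / (a : ℂ) ^ s
      = ((↑μ * A : ArithmeticFunction ℂ)) m := by
    intro m hm
    have hm0 : m ≠ 0 := (Nat.pos_of_mem_divisors hm).ne'
    rw [mul_apply,
      Nat.sum_divisorsAntidiagonal (f := fun a b => (↑μ : ArithmeticFunction ℂ) a * A b),
      Finset.mul_sum]
    refine Finset.sum_congr rfl fun a ha => ?_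
    have ha0 : a ≠ 0 := (Nat.pos_of_mem_divisors ha).ne'
    have hadvd : a ∣ m := (Nat.mem_divisors.mp ha).1
    have has : ((a : ℂ)) ^ s ≠ 0 := by
      simp only [ne_eq, Complex.cpow_eq_zero_iff, not_and_or, not_not]
      left
      exact_mod_cast ha0
    have key : ((m : ℂ)) ^ s = (a : ℂ) ^ s * ((m / a : ℕ) : ℂ) ^ s := by
      conv_lhs => rw [← Nat.mul_div_cancel' hadvd]
      push_cast
      exact Complex.natCast_mul_natCast_cpow a (m / a) s
    rw [key, intCoe_apply]
    show (a:ℂ)^s * ((m / a : ℕ):ℂ)^s * (((μ a : ℤ):ℂ) / (a:ℂ)^s) = ((μ a : ℤ):ℂ) * A (m / a)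
    have : A (m / a) = ((m / a : ℕ) : ℂ) ^ s := rfl
    rw [this]
    field_simp
  rw [Finset.sum_congr rfl hstep, ← coe_mul_zeta_apply]
  have hAA : (↑μ * A) * ↑ζ = A := by
    rw [mul_comm (↑μ : ArithmeticFunction ℂ) A, mul_assoc, coe_moebius_mul_coe_zeta, mul_one]
  rw [hAA]
  rfl

end LerchAux

open Finset ArithmeticFunction

namespace LerchAux

lemma norm_term (q : ℕ) (s : ℂ) (b n : ℕ) :
    ‖Complex.exp (2 * Real.pi * Complex.I * ((n : ℂ) + 1) * b / q) / ((n + 1 : ℕ) : ℂ) ^ s‖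
      = 1 / ((n + 1 : ℕ) : ℝ) ^ s.re := by
  rw [norm_div]
  have harg : 2 * (Real.pi : ℂ) * Complex.I * ((n : ℂ) + 1) * (b : ℂ) / (q : ℂ)
      = ((2 * Real.pi * ((n : ℝ) + 1) * (b : ℝ) / (q : ℝ) : ℝ) : ℂ) * Complex.I := by
    push_cast; ring
  rw [harg, Complex.norm_exp_ofReal_mul_I,
    Complex.norm_natCast_cpow_of_pos (Nat.succ_pos n)]

lemma summable_term (q : ℕ) (s : ℂ) (hs : 1 < s.re) (b : ℕ) :
    Summable (fun n : ℕ =>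
      Complex.exp (2 * Real.pi * Complex.I * ((n : ℂ) + 1) * b / q) /
        ((n + 1 : ℕ) : ℂ) ^ s) := by
  apply Summable.of_norm
  have h : (fun n : ℕ => ‖Complex.exp (2 * Real.pi * Complex.I * ((n : ℂ) + 1) * b / q) /
      ((n + 1 : ℕ) : ℂ) ^ s‖) = fun n : ℕ => 1 / ((n + 1 : ℕ) : ℝ) ^ s.re :=
    funext fun n => norm_term q s b n
  rw [h]
  exact_mod_cast (summable_nat_add_iff 1).mpr (Real.summable_one_div_nat_rpow.mpr hs)

lemma tsum_multiples (s : ℂ) (hs : 1 < s.re) (e : ℕ) (he : e ≠ 0) :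
    ∑' n : ℕ, (if e ∣ (n + 1) then 1 / ((n + 1 : ℕ) : ℂ) ^ s else 0)
      = 1 / (e : ℂ) ^ s * riemannZeta s := by
  have hs0 : s ≠ 0 := by
    intro h; rw [h, Complex.zero_re] at hs; linarith
  set G : ℕ → ℂ := fun n => if e ∣ n then 1 / (n : ℂ) ^ s else 0 with hG
  have hsum : Summable (fun n : ℕ => 1 / (n : ℂ) ^ s) :=
    Complex.summable_one_div_nat_cpow.mpr hs
  have hGsum : Summable G := by
    apply hsum.summable_of_eq_zero_or_self
    intro n
    by_cases h : e ∣ n <;> simp [hG, h]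
  have h1 : ∑' n : ℕ, G (n + 1) = ∑' n, G n := by
    have := hGsum.tsum_eq_zero_add
    rw [this]
    have hG0 : G 0 = 0 := by simp [hG, Complex.zero_cpow hs0]
    rw [hG0, zero_add]
  have hinj : Function.Injective (fun k : ℕ => e * k) := fun a b hab => by
    simpa [Nat.pos_of_ne_zero he] using Nat.eq_of_mul_eq_mul_left (Nat.pos_of_ne_zero he) hab
  have h2 : ∑' k : ℕ, G (e * k) = ∑' n, G n := by
    apply hinj.tsum_eq
    intro n hn
    rw [Function.mem_support] at hn
    have hdvd : e ∣ n := by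
      by_contra h
      exact hn (by simp [hG, h])
    obtain ⟨c, rfl⟩ := hdvd
    exact ⟨c, rfl⟩
  have h3 : ∀ k : ℕ, G (e * k) = 1 / (e : ℂ) ^ s * (1 / (k : ℂ) ^ s) := by
    intro k
    rw [hG]
    simp only []
    rw [if_pos (Dvd.intro k rfl)]
    push_cast
    rw [Complex.natCast_mul_natCast_cpow, div_mul_div_comm, one_mul]
  calc ∑' n : ℕ, (if e ∣ (n + 1) then 1 / ((n + 1 : ℕ) : ℂ) ^ s else 0)
      = ∑' n : ℕ, G (n + 1) := rfl
    _ = ∑' n, G n := h1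
    _ = ∑' k : ℕ, G (e * k) := h2.symm
    _ = ∑' k : ℕ, 1 / (e : ℂ) ^ s * (1 / (k : ℂ) ^ s) := by
        exact tsum_congr h3
    _ = 1 / (e : ℂ) ^ s * riemannZeta s := by
        rw [tsum_mul_left, zeta_eq_tsum_one_div_nat_cpow hs]

end LerchAux

open Finset ArithmeticFunction Complex Real

namespace LerchAux

lemma moebius_sum_divisors (g : ℕ) :
    ∑ t ∈ g.divisors, ((μ t : ℤ) : ℂ) = if g = 1 then 1 else 0 := by
  have h1 : ((↑μ * ↑ζ : ArithmeticFunction ℂ)) g = ∑ t ∈ g.divisors, (↑μ : ArithmeticFunction ℂ) t :=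
    coe_mul_zeta_apply
  rw [coe_moebius_mul_coe_zeta] at h1
  rw [show (∑ t ∈ g.divisors, ((μ t : ℤ) : ℂ))
      = ∑ t ∈ g.divisors, (↑μ : ArithmeticFunction ℂ) t from
    Finset.sum_congr rfl fun t _ => (intCoe_apply).symm]
  rw [← h1, one_apply]

lemma divisors_filter_dvd {M : ℕ} (hM : M ≠ 0) (b : ℕ) (hb : b ≠ 0) :
    M.divisors.filter (fun t => t ∣ b) = (Nat.gcd b M).divisors := by
  ext t
  have hg : Nat.gcd b M ≠ 0 := Nat.gcd_ne_zero_left hb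
  simp only [Finset.mem_filter, Nat.mem_divisors, Nat.dvd_gcd_iff]
  tauto

lemma dvd_mul_iff_div_gcd (q t n : ℕ) (hq : q ≠ 0) :
    q ∣ n * t ↔ (q / Nat.gcd q t) ∣ n := by
  have hgpos : 0 < Nat.gcd q t := Nat.gcd_pos_of_pos_left t (Nat.pos_of_ne_zero hq)
  set g := Nat.gcd q t with hgdef
  have hco : Nat.Coprime (q / g) (t / g) := Nat.coprime_div_gcd_div_gcd hgpos
  have hq' : g * (q / g) = q := Nat.mul_div_cancel' (Nat.gcd_dvd_left q t)
  have ht' : g * (t / g) = t := Nat.mul_div_cancel' (Nat.gcd_dvd_right q t)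
  constructor
  · intro h
    have h2 : g * (q / g) ∣ g * (n * (t / g)) := by
      rw [hq']
      have heq : n * t = g * (n * (t / g)) := by
        conv_lhs => rw [← ht']
        ring
      rwa [heq] at h
    have h3 : (q / g) ∣ n * (t / g) := (mul_dvd_mul_iff_left hgpos.ne').mp h2
    exact (Nat.Coprime.dvd_of_dvd_mul_right hco h3)
  · intro h
    calc q = g * (q / g) := hq'.symm
      _ ∣ g * n := mul_dvd_mul_left g h
      _ ∣ n * t := ⟨t / g, by
          conv_lhs => rw [← ht']
          ring⟩

lemma geom_sum_eval (q P : ℕ) (hq : 0 < q) (hP : 0 < P) (n t : ℕ)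
    (ht : t ∈ (q * P).divisors) :
    ∑ c ∈ Finset.Icc 1 (q * P / t), Complex.exp (2 * (π : ℂ) * I * n * (t * c : ℕ) / q)
      = if q ∣ n * t then ((q * P / t : ℕ) : ℂ) else 0 := by
  obtain ⟨htdvd, hM0⟩ := Nat.mem_divisors.mp ht
  have hq0 : (q : ℂ) ≠ 0 := Nat.cast_ne_zero.mpr hq.ne'
  have hπI : (2 * (π : ℂ) * I) ≠ 0 :=
    mul_ne_zero (mul_ne_zero two_ne_zero (Complex.ofReal_ne_zero.mpr Real.pi_ne_zero)) I_ne_zero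
  set K := q * P / t with hK
  set z := Complex.exp (2 * (π : ℂ) * I * n * t / q) with hz
  have hzc : ∀ c : ℕ, Complex.exp (2 * (π : ℂ) * I * n * (t * c : ℕ) / q) = z ^ c := by
    intro c
    rw [hz, ← Complex.exp_nat_mul]
    congr 1
    push_cast
    ring
  have hKt : (K : ℂ) * (t : ℂ) = (q : ℂ) * (P : ℂ) := by
    have := Nat.div_mul_cancel htdvd
    exact_mod_cast congrArg (Nat.cast : ℕ → ℂ) this
  have hzK : z ^ K = 1 := by
    rw [hz, ← Complex.exp_nat_mul]
    have harg : (K : ℂ) * (2 * (π : ℂ) * I * n * t / q) = ((n * P : ℕ) : ℤ) * (2 * π * I) := by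
      push_cast
      field_simp
      linear_combination (n : ℂ) * hKt
    rw [harg, Complex.exp_int_mul_two_pi_mul_I]
  have hziff : z = 1 ↔ q ∣ n * t := by
    rw [hz, Complex.exp_eq_one_iff]
    constructor
    · rintro ⟨k, hk⟩
      have h2 : (2 * (π : ℂ) * I) * ((n : ℂ) * t) = (2 * (π : ℂ) * I) * ((k : ℂ) * q) := by
        field_simp at hk
        linear_combination (2 * (π : ℂ) * I) * hk
      have h3 : ((n * t : ℕ) : ℂ) = ((k * q : ℤ) : ℂ) := by
        push_cast
        exact mul_left_cancel₀ hπI h2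
      have h4 : ((n * t : ℕ) : ℤ) = k * q := by exact_mod_cast h3
      have : (q : ℤ) ∣ ((n * t : ℕ) : ℤ) := ⟨k, by rw [h4]; ring⟩
      exact_mod_cast this
    · rintro ⟨d, hd⟩
      refine ⟨d, ?_⟩
      have hcast : (n : ℂ) * t = q * d := by exact_mod_cast congrArg (Nat.cast : ℕ → ℂ) hd
      field_simp
      linear_combination hcast
  rw [show (∑ c ∈ Finset.Icc 1 K, Complex.exp (2 * (π : ℂ) * I * n * (t * c : ℕ) / q))
      = ∑ c ∈ Finset.Icc 1 K, z ^ c from Finset.sum_congr rfl fun c _ => hzc c]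
  by_cases hz1 : z = 1
  · rw [if_pos (hziff.mp hz1)]
    rw [show (∑ c ∈ Finset.Icc 1 K, z ^ c) = ∑ c ∈ Finset.Icc 1 K, 1 from
      Finset.sum_congr rfl fun c _ => by rw [hz1, one_pow]]
    rw [Finset.sum_const, Nat.card_Icc]
    simp
  · rw [if_neg (fun h => hz1 (hziff.mpr h))]
    have hre : ∑ c ∈ Finset.Icc 1 K, z ^ c = ∑ i ∈ Finset.range K, z * z ^ i := by
      rw [show Finset.Icc 1 K = Finset.Ico 1 (K + 1) by rw [Finset.Ico_add_one_right_eq_Icc]]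
      rw [Finset.sum_Ico_eq_sum_range]
      simp only [Nat.add_sub_cancel]
      exact Finset.sum_congr rfl fun i _ => by rw [pow_add, pow_one]
    rw [hre, ← Finset.mul_sum, geom_sum_eq hz1, hzK]
    simp

end LerchAux

namespace LerchAux
open Finset ArithmeticFunction Complex Real

lemma char_sum (q P : ℕ) (hq : 0 < q) (hP : 0 < P) (n : ℕ) :
    ∑ b ∈ Finset.Icc 1 (q * P),
      (if Nat.gcd b (q * P) = 1 then Complex.exp (2 * (π : ℂ) * I * n * b / q) else 0)
    = ∑ t ∈ (q * P).divisors, ((μ t : ℤ) : ℂ) *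
        (if q ∣ n * t then ((q * P / t : ℕ) : ℂ) else 0) := by
  have hM0 : q * P ≠ 0 := Nat.mul_ne_zero hq.ne' hP.ne'
  have step1 : ∀ b ∈ Finset.Icc 1 (q * P),
      (if Nat.gcd b (q * P) = 1 then Complex.exp (2 * (π : ℂ) * I * n * b / q) else 0)
      = ∑ t ∈ (q * P).divisors,
          (if t ∣ b then ((μ t : ℤ) : ℂ) * Complex.exp (2 * (π : ℂ) * I * n * b / q) else 0) := by
    intro b hb
    have hb0 : b ≠ 0 := by
      have := (Finset.mem_Icc.mp hb).1; omega
    rw [← Finset.sum_filter, divisors_filter_dvd hM0 b hb0, ← Finset.sum_mul,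
      moebius_sum_divisors, ite_mul, one_mul, zero_mul]
  rw [Finset.sum_congr rfl step1, Finset.sum_comm]
  refine Finset.sum_congr rfl fun t ht => ?_
  obtain ⟨htdvd, -⟩ := Nat.mem_divisors.mp ht
  have ht0 : t ≠ 0 := (Nat.pos_of_mem_divisors ht).ne'
  have step3 : ∑ b ∈ Finset.Icc 1 (q * P),
      (if t ∣ b then ((μ t : ℤ) : ℂ) * Complex.exp (2 * (π : ℂ) * I * n * b / q) else 0)
      = ((μ t : ℤ) : ℂ) *
          ∑ c ∈ Finset.Icc 1 (q * P / t), Complex.exp (2 * (π : ℂ) * I * n * (t * c : ℕ) / q) := by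
    rw [← Finset.sum_filter, Finset.mul_sum]
    refine Finset.sum_nbij' (fun b => b / t) (fun c => t * c) ?_ ?_ ?_ ?_ ?_
    · intro b hb
      obtain ⟨hbIcc, htb⟩ := Finset.mem_filter.mp hb
      obtain ⟨hb1, hbM⟩ := Finset.mem_Icc.mp hbIcc
      show b / t ∈ Finset.Icc 1 (q * P / t)
      rw [Finset.mem_Icc]
      refine ⟨?_, Nat.div_le_div_right hbM⟩
      exact (Nat.one_le_div_iff (Nat.pos_of_ne_zero ht0)).mpr (Nat.le_of_dvd (by omega) htb)
    · intro c hc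
      obtain ⟨hc1, hcK⟩ := Finset.mem_Icc.mp hc
      show t * c ∈ (Finset.Icc 1 (q * P)).filter (fun b => t ∣ b)
      rw [Finset.mem_filter, Finset.mem_Icc]
      refine ⟨⟨?_, ?_⟩, Dvd.intro c rfl⟩
      · exact Nat.one_le_iff_ne_zero.mpr (Nat.mul_ne_zero ht0 (by omega))
      · calc t * c ≤ t * (q * P / t) := Nat.mul_le_mul_left t hcK
          _ = q * P := Nat.mul_div_cancel' htdvd
    · intro b hb
      obtain ⟨-, htb⟩ := Finset.mem_filter.mp hb
      exact Nat.mul_div_cancel' htb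
    · intro c hc
      exact Nat.mul_div_cancel_left c (Nat.pos_of_ne_zero ht0)
    · intro b hb
      obtain ⟨-, htb⟩ := Finset.mem_filter.mp hb
      show ((μ t : ℤ) : ℂ) * Complex.exp (2 * (π : ℂ) * I * n * b / q)
        = ((μ t : ℤ) : ℂ) * Complex.exp (2 * (π : ℂ) * I * n * ((t * (b / t) : ℕ) : ℂ) / q)
      rw [Nat.mul_div_cancel' htb]
  rw [step3, geom_sum_eval q P hq hP n t ht]

end LerchAux

namespace LerchAux
open Finset ArithmeticFunction Complex Real

lemma summable_G (s : ℂ) (hs : 1 < s.re) (e : ℕ) :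
    Summable (fun n : ℕ => if e ∣ (n + 1) then 1 / ((n + 1 : ℕ) : ℂ) ^ s else 0) := by
  have hsum : Summable (fun n : ℕ => 1 / (n : ℂ) ^ s) :=
    Complex.summable_one_div_nat_cpow.mpr hs
  have hGsum : Summable (fun n : ℕ => if e ∣ n then 1 / (n : ℂ) ^ s else 0) := by
    apply hsum.summable_of_eq_zero_or_self
    intro n
    by_cases h : e ∣ n <;> simp [h]
  exact (summable_nat_add_iff
    (f := fun n : ℕ => if e ∣ n then 1 / ((n : ℕ) : ℂ) ^ s else 0) 1).mpr hGsum

lemma lhs_eval (q P : ℕ) (hq : 0 < q) (hP : 0 < P) (s : ℂ) (hs : 1 < s.re) :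
    ∑ b ∈ Finset.Icc 1 (q * P),
        (if Nat.gcd b (q * P) = 1 then
          ∑' n : ℕ, Complex.exp (2 * Real.pi * Complex.I * ((n : ℂ) + 1) * b / q) /
            ((n + 1 : ℕ) : ℂ) ^ s
        else 0)
    = ∑ t ∈ (q * P).divisors, ((μ t : ℤ) : ℂ) * ((q * P / t : ℕ) : ℂ) *
        (1 / ((q / Nat.gcd q t : ℕ) : ℂ) ^ s) * riemannZeta s := by
  have hq0 : q ≠ 0 := hq.ne'
  have h1 : ∀ b ∈ Finset.Icc 1 (q * P),
      (if Nat.gcd b (q * P) = 1 then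
        ∑' n : ℕ, Complex.exp (2 * Real.pi * Complex.I * ((n : ℂ) + 1) * b / q) /
          ((n + 1 : ℕ) : ℂ) ^ s
      else 0)
      = ∑' n : ℕ, (if Nat.gcd b (q * P) = 1 then
          Complex.exp (2 * Real.pi * Complex.I * ((n : ℂ) + 1) * b / q) /
            ((n + 1 : ℕ) : ℂ) ^ s else 0) := by
    intro b _
    split_ifs with h
    · rfl
    · exact tsum_zero.symm
  rw [Finset.sum_congr rfl h1, ← Summable.tsum_finsetSum (by
    intro b _
    by_cases h : Nat.gcd b (q * P) = 1
    · simp only [if_pos h]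
      exact summable_term q s hs b
    · simp only [if_neg h]
      exact summable_zero)]
  have h2 : ∀ n : ℕ, (∑ b ∈ Finset.Icc 1 (q * P),
      (if Nat.gcd b (q * P) = 1 then
        Complex.exp (2 * Real.pi * Complex.I * ((n : ℂ) + 1) * b / q) /
          ((n + 1 : ℕ) : ℂ) ^ s else 0))
      = ∑ t ∈ (q * P).divisors, ((μ t : ℤ) : ℂ) * ((q * P / t : ℕ) : ℂ) *
          (if (q / Nat.gcd q t) ∣ (n + 1) then 1 / ((n + 1 : ℕ) : ℂ) ^ s else 0) := by
    intro n
    have hchar := char_sum q P hq hP (n + 1)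
    calc ∑ b ∈ Finset.Icc 1 (q * P),
        (if Nat.gcd b (q * P) = 1 then
          Complex.exp (2 * Real.pi * Complex.I * ((n : ℂ) + 1) * b / q) /
            ((n + 1 : ℕ) : ℂ) ^ s else 0)
        = (∑ b ∈ Finset.Icc 1 (q * P),
            (if Nat.gcd b (q * P) = 1 then
              Complex.exp (2 * (π : ℂ) * I * ((n + 1 : ℕ) : ℂ) * b / q) else 0)) /
            ((n + 1 : ℕ) : ℂ) ^ s := by
          rw [Finset.sum_div]
          refine Finset.sum_congr rfl fun b _ => ?_
          split_ifs with h
          · congr 2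
            push_cast
            ring
          · exact (zero_div _).symm
      _ = (∑ t ∈ (q * P).divisors, ((μ t : ℤ) : ℂ) *
            (if q ∣ (n + 1) * t then ((q * P / t : ℕ) : ℂ) else 0)) /
            ((n + 1 : ℕ) : ℂ) ^ s := by rw [hchar]
      _ = ∑ t ∈ (q * P).divisors, ((μ t : ℤ) : ℂ) * ((q * P / t : ℕ) : ℂ) *
            (if (q / Nat.gcd q t) ∣ (n + 1) then 1 / ((n + 1 : ℕ) : ℂ) ^ s else 0) := by
          rw [Finset.sum_div]
          refine Finset.sum_congr rfl fun t ht => ?_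
          simp only [dvd_mul_iff_div_gcd q t (n + 1) hq0]
          split_ifs with h
          · ring
          · simp
  rw [tsum_congr h2, Summable.tsum_finsetSum (by
    intro t _
    exact Summable.mul_left _ (summable_G s hs _))]
  refine Finset.sum_congr rfl fun t ht => ?_
  have he : q / Nat.gcd q t ≠ 0 :=
    (Nat.div_pos (Nat.le_of_dvd hq (Nat.gcd_dvd_left q t))
      (Nat.gcd_pos_of_pos_left t hq)).ne'
  rw [tsum_mul_left, tsum_multiples s hs _ he]
  ring

lemma rhs_eval (q P : ℕ) (hq : 0 < q) (hP : 0 < P) (s : ℂ) (hs0 : s ≠ 0) :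
    riemannZeta s * ((Nat.totient (q * P) : ℂ)) *
        ∑ m ∈ q.divisors,
          ((μ m : ℤ) : ℂ) / (Nat.totient m : ℂ) * (((m : ℂ)) / ((q : ℂ))) ^ s *
            ∑ a ∈ m.divisors, ((μ a : ℤ) : ℂ) / ((a : ℂ)) ^ s
    = ∑ t ∈ (q * P).divisors, ((μ t : ℤ) : ℂ) * ((q * P / t : ℕ) : ℂ) *
        (1 / ((q / Nat.gcd q t : ℕ) : ℂ) ^ s) * riemannZeta s := by
  have hq0 : q ≠ 0 := hq.ne'
  have hM0 : q * P ≠ 0 := Nat.mul_ne_zero hq.ne' hP.ne'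
  have hqs : ((q : ℂ)) ^ s ≠ 0 := by
    simp only [ne_eq, Complex.cpow_eq_zero_iff, not_and_or, not_not]
    left
    exact_mod_cast hq0
  have hram : ∀ m ∈ q.divisors, ((μ m : ℤ) : ℂ) * ((Nat.totient (q * P) : ℂ)) /
      (Nat.totient m : ℂ)
      = ∑ t ∈ (q * P).divisors.filter (fun t => m ∣ t),
          ((μ t : ℤ) : ℂ) * ((q * P / t : ℕ) : ℂ) := by
    intro m hm
    have hmdvd : m ∣ q * P := ((Nat.mem_divisors.mp hm).1).trans (dvd_mul_right q P)
    have h := ramanujan_like hM0 hmdvd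
    have h2 := congrArg (fun x : ℚ => (x : ℂ)) h.symm
    push_cast at h2
    exact h2
  suffices hcore : ((Nat.totient (q * P) : ℂ)) *
      ∑ m ∈ q.divisors,
        ((μ m : ℤ) : ℂ) / (Nat.totient m : ℂ) * (((m : ℂ)) / ((q : ℂ))) ^ s *
          ∑ a ∈ m.divisors, ((μ a : ℤ) : ℂ) / ((a : ℂ)) ^ s
      = ∑ t ∈ (q * P).divisors, ((μ t : ℤ) : ℂ) * ((q * P / t : ℕ) : ℂ) *
          (1 / ((q / Nat.gcd q t : ℕ) : ℂ) ^ s) by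
    rw [mul_assoc, hcore, Finset.mul_sum]
    exact Finset.sum_congr rfl fun t _ => by ring
  calc ((Nat.totient (q * P) : ℂ)) * ∑ m ∈ q.divisors,
        ((μ m : ℤ) : ℂ) / (Nat.totient m : ℂ) * (((m : ℂ)) / ((q : ℂ))) ^ s *
          ∑ a ∈ m.divisors, ((μ a : ℤ) : ℂ) / ((a : ℂ)) ^ s
      = ∑ m ∈ q.divisors, ∑ t ∈ (q * P).divisors,
          (if m ∣ t then ((μ t : ℤ) : ℂ) * ((q * P / t : ℕ) : ℂ) *
            (((m : ℂ) ^ s * ∑ a ∈ m.divisors, ((μ a : ℤ) : ℂ) / ((a : ℂ)) ^ s) / (q : ℂ) ^ s)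
          else 0) := by
        rw [Finset.mul_sum]
        refine Finset.sum_congr rfl fun m hm => ?_
        rw [← Finset.sum_filter]
        rw [natCast_div_cpow s hs0 m q hq0]
        rw [show ((Nat.totient (q * P) : ℂ)) *
            (((μ m : ℤ) : ℂ) / (Nat.totient m : ℂ) * ((m : ℂ) ^ s / (q : ℂ) ^ s) *
              ∑ a ∈ m.divisors, ((μ a : ℤ) : ℂ) / ((a : ℂ)) ^ s)
          = (((μ m : ℤ) : ℂ) * ((Nat.totient (q * P) : ℂ)) / (Nat.totient m : ℂ)) *
              (((m : ℂ) ^ s * ∑ a ∈ m.divisors, ((μ a : ℤ) : ℂ) / ((a : ℂ)) ^ s) /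
                (q : ℂ) ^ s) from by ring]
        rw [hram m hm, Finset.sum_mul]
    _ = ∑ t ∈ (q * P).divisors, ∑ m ∈ q.divisors,
          (if m ∣ t then ((μ t : ℤ) : ℂ) * ((q * P / t : ℕ) : ℂ) *
            (((m : ℂ) ^ s * ∑ a ∈ m.divisors, ((μ a : ℤ) : ℂ) / ((a : ℂ)) ^ s) / (q : ℂ) ^ s)
          else 0) := Finset.sum_comm
    _ = ∑ t ∈ (q * P).divisors, ((μ t : ℤ) : ℂ) * ((q * P / t : ℕ) : ℂ) *
          (1 / ((q / Nat.gcd q t : ℕ) : ℂ) ^ s) := by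
        refine Finset.sum_congr rfl fun t ht => ?_
        have ht0 : t ≠ 0 := (Nat.pos_of_mem_divisors ht).ne'
        have hgne : Nat.gcd t q ≠ 0 := Nat.gcd_ne_zero_left ht0
        rw [← Finset.sum_filter, divisors_filter_dvd hq0 t ht0]
        rw [show (∑ m ∈ (Nat.gcd t q).divisors,
            ((μ t : ℤ) : ℂ) * ((q * P / t : ℕ) : ℂ) *
              (((m : ℂ) ^ s * ∑ a ∈ m.divisors, ((μ a : ℤ) : ℂ) / ((a : ℂ)) ^ s) / (q : ℂ) ^ s))
          = ((μ t : ℤ) : ℂ) * ((q * P / t : ℕ) : ℂ) *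
              ((∑ m ∈ (Nat.gcd t q).divisors,
                (m : ℂ) ^ s * ∑ a ∈ m.divisors, ((μ a : ℤ) : ℂ) / ((a : ℂ)) ^ s) / (q : ℂ) ^ s)
          from by rw [Finset.sum_div, Finset.mul_sum]]
        rw [sum_cpow_moebius s hs0 hgne]
        congr 1
        have hgq : Nat.gcd q t ∣ q := Nat.gcd_dvd_left q t
        have hgc : ((Nat.gcd q t : ℕ) : ℂ) ≠ 0 := by
          exact_mod_cast (Nat.gcd_pos_of_pos_left t hq).ne'
        rw [show ((q / Nat.gcd q t : ℕ) : ℂ) = (q : ℂ) / ((Nat.gcd q t : ℕ) : ℂ) from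
          Nat.cast_div hgq hgc]
        rw [natCast_div_cpow s hs0 q (Nat.gcd q t) (Nat.gcd_pos_of_pos_left t hq).ne']
        rw [one_div_div, Nat.gcd_comm t q]

end LerchAux

/-- Let `q, P ≥ 1` and `Re s > 1`.  Then, the inner series being absolutely convergent,
`∑_{1 ≤ b ≤ qP, gcd(b,qP)=1} ∑_{n≥1} e^{2πi nb/q} n^{-s}
  = ζ(s) φ(qP) ∑_{m ∣ q} (μ(m)/φ(m)) (m/q)^s ∑_{a ∣ m} μ(a) a^{-s}`. -/
theorem lerch_sum_evaluation (q P : ℕ) (hq : 0 < q) (hP : 0 < P) (s : ℂ) (hs : 1 < s.re) :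
    (∀ b : ℕ, Summable (fun n : ℕ =>
        Complex.exp (2 * Real.pi * Complex.I * ((n : ℂ) + 1) * b / q) /
          ((n + 1 : ℕ) : ℂ) ^ s)) ∧
    ∑ b ∈ Finset.Icc 1 (q * P),
        (if Nat.gcd b (q * P) = 1 then
          ∑' n : ℕ, Complex.exp (2 * Real.pi * Complex.I * ((n : ℂ) + 1) * b / q) /
            ((n + 1 : ℕ) : ℂ) ^ s
        else 0)
      = riemannZeta s * ((Nat.totient (q * P) : ℂ)) *
          ∑ m ∈ q.divisors,
            ((ArithmeticFunction.moebius m : ℤ) : ℂ) / (Nat.totient m : ℂ) *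
              (((m : ℂ)) / ((q : ℂ))) ^ s *
              ∑ a ∈ m.divisors, ((ArithmeticFunction.moebius a : ℤ) : ℂ) / ((a : ℂ)) ^ s := by
  have hs0 : s ≠ 0 := by
    intro h; rw [h, Complex.zero_re] at hs; linarith
  exact ⟨fun b => LerchAux.summable_term q s hs b,
    (LerchAux.lhs_eval q P hq hP s hs).trans (LerchAux.rhs_eval q P hq hP s hs0).symm⟩
end
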